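/- arXiv:2204.08520 — 5 statements merged into one kernel-verified Lean document; each statement's English description precedes it below -/
import Mathlib

section
/- Let A, B be unital C*-algebras with compatible 𝔄-actions, π: A → B(H) and σ: B → B(K) injective *-representations, and endow B(H), B(K) with the 𝔄-actions x·α = xπ(1·α), α·y = σ(α·1)y. Let I′ be the corresponding ideal of π(A) ⊙ σ(B). Then the induced *-homomorphism π ⊙_𝔄 σ: A ⊙_𝔄 B → (π(A) ⊙ σ(B))/I′ is injective. -/
open scoped TensorProduct
noncomputable section

/-- A compatible action of a C*-algebra `𝔄` on a C*-algebra `A` (Amini):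
bilinear, bounded, compatible with multiplication and star. -/
structure CompatibleAction (𝔄 A : Type*) [NonUnitalNormedRing 𝔄] [StarRing 𝔄]
    [NormedSpace ℂ 𝔄] [NonUnitalNormedRing A] [StarRing A] [NormedSpace ℂ A] where
  l : 𝔄 →ₗ[ℂ] A →ₗ[ℂ] A
  r : A →ₗ[ℂ] 𝔄 →ₗ[ℂ] A
  bound : ℝ
  bound_pos : 0 < bound
  norm_l : ∀ α a, ‖l α a‖ ≤ bound * ‖a‖ * ‖α‖
  norm_r : ∀ a α, ‖r a α‖ ≤ bound * ‖a‖ * ‖α‖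
  l_mul : ∀ α a b, l α (a * b) = (l α a) * b
  mul_r : ∀ a b α, r (a * b) α = a * (r b α)
  star_l : ∀ α a, star (l α a) = r (star a) (star α)
  star_r : ∀ a α, star (r a α) = l (star α) (star a)

/-- The action is commutative: `α • a = a • α`. -/
def CompatibleAction.IsCommutative {𝔄 A : Type*} [NonUnitalNormedRing 𝔄] [StarRing 𝔄]
    [NormedSpace ℂ 𝔄] [NonUnitalNormedRing A] [StarRing A] [NormedSpace ℂ A]
    (act : CompatibleAction 𝔄 A) : Prop :=
  ∀ (α : 𝔄) (a : A), act.l α a = act.r a α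

/-- A C*-seminorm on a complex *-algebra, with the star operation given explicitly
(to accommodate algebraic tensor products, where the star is `tstar`). -/
structure CstarSeminorm (R : Type*) [NonUnitalRing R] [Module ℂ R] (st : R → R) where
  ν : R → ℝ
  nonneg : ∀ x, 0 ≤ ν x
  add_le : ∀ x y, ν (x + y) ≤ ν x + ν y
  smul_eq : ∀ (c : ℂ) (x : R), ν (c • x) = ‖c‖ * ν x
  mul_le : ∀ x y, ν (x * y) ≤ ν x * ν y
  cstar : ∀ x, ν (st x * x) = ν x ^ 2

def CstarSeminorm.IsNorm {R : Type*} [NonUnitalRing R] [Module ℂ R] {st : R → R}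
    (p : CstarSeminorm R st) : Prop := ∀ x, p.ν x = 0 → x = 0

/-- `γ` is the maximal C*-norm: it is a norm and dominates every C*-seminorm. -/
def CstarSeminorm.IsMax {R : Type*} [NonUnitalRing R] [Module ℂ R] {st : R → R}
    (γ : CstarSeminorm R st) : Prop :=
  γ.IsNorm ∧ ∀ p : CstarSeminorm R st, ∀ x, p.ν x ≤ γ.ν x

/-- `γ` is the minimal C*-norm: it is a norm dominated by every C*-norm. -/
def CstarSeminorm.IsMin {R : Type*} [NonUnitalRing R] [Module ℂ R] {st : R → R}
    (γ : CstarSeminorm R st) : Prop :=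
  γ.IsNorm ∧ ∀ p : CstarSeminorm R st, p.IsNorm → ∀ x, γ.ν x ≤ p.ν x

/-- Quotient seminorm `‖x + I‖ = inf_{i ∈ I} ν (x + i)`. -/
def quotNorm {R : Type*} [AddCommGroup R] (ν : R → ℝ) (I : Set R) (x : R) : ℝ :=
  sInf ((fun i => ν (x + i)) '' I)

/-- The two-sided ideal (as a `ℂ`-submodule) generated by a set `G`. -/
def idealSpan (R : Type*) [NonUnitalRing R] [Module ℂ R] (G : Set R) : Submodule ℂ R :=
  Submodule.span ℂ
    {y | ∃ g ∈ G, y = g ∨ (∃ u, y = u * g) ∨ (∃ v, y = g * v) ∨ ∃ u v, y = u * g * v}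

/-- The star operation on the algebraic tensor product `A ⊗[ℂ] B`,
`(a ⊗ b)* = a* ⊗ b*` (conjugate-linear, hence only an `AddMonoidHom`). -/
def tstar (A B : Type*) [Ring A] [StarRing A] [Algebra ℂ A] [StarModule ℂ A]
    [Ring B] [StarRing B] [Algebra ℂ B] [StarModule ℂ B] : A ⊗[ℂ] B →+ A ⊗[ℂ] B :=
  TensorProduct.liftAddHom
    { toFun := fun a =>
        { toFun := fun b => star a ⊗ₜ[ℂ] star b
          map_zero' := by simp
          map_add' := fun b c => by simp [star_add, TensorProduct.tmul_add] }
      map_zero' := by ext b; simp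
      map_add' := fun a c => by ext b; simp [star_add, TensorProduct.add_tmul] }
    (fun c a b => by simp [star_smul, TensorProduct.smul_tmul, TensorProduct.tmul_smul])

section TensorIdeal

variable {𝔄 A B : Type*}
  [NormedRing 𝔄] [StarRing 𝔄] [NormedAlgebra ℂ 𝔄]
  [NormedRing A] [StarRing A] [NormedAlgebra ℂ A]
  [NormedRing B] [StarRing B] [NormedAlgebra ℂ B]

/-- Generators `a·α ⊗ b − a ⊗ α·b` of the module ideal `I_{A,B}`. -/
def tensorGens (actA : CompatibleAction 𝔄 A) (actB : CompatibleAction 𝔄 B) :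
    Set (A ⊗[ℂ] B) :=
  {x | ∃ (α : 𝔄) (a : A) (b : B), x = (actA.r a α) ⊗ₜ[ℂ] b - a ⊗ₜ[ℂ] (actB.l α b)}

/-- The ideal `I_{A,B}` of `A ⊙ B` generated by `a·α ⊗ b − a ⊗ α·b`. -/
def moduleIdeal (actA : CompatibleAction 𝔄 A) (actB : CompatibleAction 𝔄 B) :
    Submodule ℂ (A ⊗[ℂ] B) :=
  idealSpan _ (tensorGens actA actB)

end TensorIdeal

/-- Algebraic positivity in a *-ring: `x = y* y`. -/
def StarPos {R : Type*} [Mul R] [Star R] (x : R) : Prop := ∃ y, x = star y * y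

/-- A completely positive map: positive matrices over `A` map to positive matrices over `B`. -/
def IsCP {A B : Type*} [NonUnitalRing A] [StarRing A] [NonUnitalRing B] [StarRing B]
    (u : A → B) : Prop :=
  ∀ (n : ℕ) (M : Matrix (Fin n) (Fin n) A), StarPos M → StarPos (M.map u)

/-- An `𝔄`-bimodule map. -/
def IsModuleMap {𝔄 A B : Type*} [NonUnitalNormedRing 𝔄] [StarRing 𝔄] [NormedSpace ℂ 𝔄]
    [NonUnitalNormedRing A] [StarRing A] [NormedSpace ℂ A]
    [NonUnitalNormedRing B] [StarRing B] [NormedSpace ℂ B]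
    (actA : CompatibleAction 𝔄 A) (actB : CompatibleAction 𝔄 B) (u : A → B) : Prop :=
  (∀ α a, u (actA.l α a) = actB.l α (u a)) ∧ ∀ a α, u (actA.r a α) = actB.r (u a) α

set_option maxHeartbeats 1600000 in
/-- Let `π : A → B(H)`, `σ : B → B(K)` be injective *-representations of
unital C*-algebras with compatible `𝔄`-actions, endow `B(H)`, `B(K)` with the actions
`x·α = x π(1·α)`, `α·y = σ(α·1) y`, and let `I'` be the corresponding ideal of
`π(A) ⊙ σ(B)`.  Then the induced map `π ⊙_𝔄 σ : A ⊙_𝔄 B → (π(A) ⊙ σ(B))/I'` is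
injective; i.e. if `(π ⊙ σ)(x) ∈ I'` then `x ∈ I_{A,B}`. -/
theorem moduleTensor_rep_injective
    {𝔄 A B H K : Type*}
    [NormedRing 𝔄] [StarRing 𝔄] [CStarRing 𝔄] [NormedAlgebra ℂ 𝔄] [StarModule ℂ 𝔄]
    [CompleteSpace 𝔄]
    [NormedRing A] [StarRing A] [CStarRing A] [NormedAlgebra ℂ A] [StarModule ℂ A]
    [CompleteSpace A]
    [NormedRing B] [StarRing B] [CStarRing B] [NormedAlgebra ℂ B] [StarModule ℂ B]
    [CompleteSpace B]
    [NormedAddCommGroup H] [InnerProductSpace ℂ H] [CompleteSpace H]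
    [NormedAddCommGroup K] [InnerProductSpace ℂ K] [CompleteSpace K]
    (actA : CompatibleAction 𝔄 A) (actB : CompatibleAction 𝔄 B)
    (π : A →⋆ₐ[ℂ] (H →L[ℂ] H)) (hπ : Function.Injective π)
    (σ : B →⋆ₐ[ℂ] (K →L[ℂ] K)) (hσ : Function.Injective σ) :
    -- `π ⊙ σ : A ⊙ B → B(H) ⊙ B(K)`:
    letI Θ : A ⊗[ℂ] B →ₐ[ℂ] ((H →L[ℂ] H) ⊗[ℂ] (K →L[ℂ] K)) :=
      Algebra.TensorProduct.map π.toAlgHom σ.toAlgHom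
    -- the ideal `I'` of `π(A) ⊙ σ(B)` generated by
    -- `π(a)·α ⊗ σ(b) − π(a) ⊗ α·σ(b)` with `x·α = x π(1·α)` and `α·y = σ(α·1) y`:
    letI I' : Submodule ℂ ((H →L[ℂ] H) ⊗[ℂ] (K →L[ℂ] K)) :=
      Submodule.span ℂ {y | ∃ g ∈ {x | ∃ (α : 𝔄) (a : A) (b : B),
            x = (π a * π (actA.r 1 α))
                ⊗ₜ[ℂ] (σ b) - (π a) ⊗ₜ[ℂ] (σ (actB.l α 1) * σ b)},
          y = g ∨ (∃ u : A ⊗[ℂ] B, y = Θ u * g) ∨ (∃ v : A ⊗[ℂ] B, y = g * Θ v) ∨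
            ∃ u v : A ⊗[ℂ] B, y = Θ u * g * Θ v}
    ∀ x : A ⊗[ℂ] B, Θ x ∈ I' → x ∈ moduleIdeal actA actB := by
  
  intro x hx
  set Θ : A ⊗[ℂ] B →ₐ[ℂ] ((H →L[ℂ] H) ⊗[ℂ] (K →L[ℂ] K)) :=
    Algebra.TensorProduct.map π.toAlgHom σ.toAlgHom with hΘdef
  -- Θ is injective since π and σ are injective linear maps over the field ℂ
  have hmap : ⇑Θ = ⇑((σ.toLinearMap.lTensor (H →L[ℂ] H)).comp
      (π.toLinearMap.rTensor B)) := by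
    rw [LinearMap.lTensor_comp_rTensor]
    ext y
    induction y using TensorProduct.induction_on with
    | zero => simp
    | tmul a b => simp [hΘdef, Algebra.TensorProduct.map_tmul]
    | add u v hu hv => simp [map_add, hu, hv]
  have hΘinj : Function.Injective Θ := by
    rw [hmap]
    exact (Module.Flat.lTensor_preserves_injective_linearMap _ hσ).comp
      (Module.Flat.rTensor_preserves_injective_linearMap _ hπ)
  -- I' is contained in the image of the module ideal
  have key : Θ x ∈ Submodule.map Θ.toLinearMap (moduleIdeal actA actB) := by
    refine Submodule.span_le.mpr ?_ hx
    rintro y ⟨g, ⟨α, a, b, rfl⟩, hy⟩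
    set g0 : A ⊗[ℂ] B := (actA.r a α) ⊗ₜ[ℂ] b - a ⊗ₜ[ℂ] (actB.l α b) with hg0
    have hgG : g0 ∈ tensorGens actA actB := ⟨α, a, b, rfl⟩
    have h1 : actA.r a α = a * actA.r 1 α := by
      conv_lhs => rw [← mul_one a]
      exact actA.mul_r a 1 α
    have h2 : actB.l α b = actB.l α 1 * b := by
      conv_lhs => rw [← one_mul b]
      exact actB.l_mul α 1 b
    have hΘg : Θ g0 = (π a * π (actA.r 1 α)) ⊗ₜ[ℂ] (σ b)
        - (π a) ⊗ₜ[ℂ] (σ (actB.l α 1) * σ b) := by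
      simp only [g0, map_sub, hΘdef, Algebra.TensorProduct.map_tmul, AlgHom.coe_coe,
        StarAlgHom.coe_toAlgHom, h1, h2, map_mul]
    rcases hy with rfl | ⟨u, rfl⟩ | ⟨v, rfl⟩ | ⟨u, v, rfl⟩
    · exact ⟨g0, Submodule.subset_span ⟨g0, hgG, Or.inl rfl⟩, hΘg⟩
    · refine ⟨u * g0, Submodule.subset_span ⟨g0, hgG, Or.inr (Or.inl ⟨u, rfl⟩)⟩, ?_⟩
      show Θ (u * g0) = _
      rw [map_mul, hΘg]
    · refine ⟨g0 * v, Submodule.subset_span ⟨g0, hgG, Or.inr (Or.inr (Or.inl ⟨v, rfl⟩))⟩, ?_⟩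
      show Θ (g0 * v) = _
      rw [map_mul, hΘg]
    · refine ⟨u * g0 * v,
        Submodule.subset_span ⟨g0, hgG, Or.inr (Or.inr (Or.inr ⟨u, v, rfl⟩))⟩, ?_⟩
      show Θ (u * g0 * v) = _
      rw [map_mul, map_mul, hΘg]
  obtain ⟨y, hy, hyx⟩ := key
  exact hΘinj hyx ▸ hy
end
end

section
/- Let N be a closed two-sided ideal and 𝔄-submodule of a C*-algebra A with compatible 𝔄-action. Then J_N = J_A ∩ N, where J_A (resp. J_N) is the closed ideal of A (resp. N) generated by elements (x·α)y − x(α·y) for x, y in A (resp. N), α ∈ 𝔄. -/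
open scoped TensorProduct
noncomputable section

section AuxJN
noncomputable def afun (n : ℕ) : ℝ → ℝ := fun t => ((n:ℝ)+1)*t/(1+((n:ℝ)+1)*t)

lemma afun_le_one (n : ℕ) {t : ℝ} (ht : 0 ≤ t) : afun n t ≤ 1 := by
  unfold afun
  rw [div_le_one (by positivity)]
  linarith

lemma afun_nonneg (n : ℕ) {t : ℝ} (ht : 0 ≤ t) : 0 ≤ afun n t := by
  unfold afun; positivity

lemma afun_bound (n : ℕ) {t : ℝ} (ht : 0 ≤ t) : t * (1 - afun n t)^2 ≤ 1/((n:ℝ)+1) := by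
  have hn : (0:ℝ) < (n:ℝ)+1 := by positivity
  have hs : (0:ℝ) < 1 + ((n:ℝ)+1)*t := by positivity
  have h1 : 1 - afun n t = 1/(1 + ((n:ℝ)+1)*t) := by
    unfold afun; field_simp; ring
  rw [h1, div_pow, one_pow, mul_div_assoc', mul_one, div_le_div_iff₀ (by positivity) hn]
  nlinarith [sq_nonneg (((n:ℝ)+1)*t)]

lemma afun_contOn (n : ℕ) {s : Set ℝ} (hs : ∀ t ∈ s, 0 ≤ t) : ContinuousOn (afun n) s := by
  apply ContinuousOn.div (by fun_prop) (by fun_prop)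
  intro t ht
  have := hs t ht
  positivity

section Aux
variable {A : Type*} [CStarAlgebra A]

lemma approx_left (x : A) (n : ℕ) :
    ‖x - cfc (afun n) (x * star x) * x‖ ≤ Real.sqrt (1/((n:ℝ)+1)) := by
  letI : PartialOrder A := CStarAlgebra.spectralOrder A
  haveI : StarOrderedRing A := CStarAlgebra.spectralOrderedRing A
  have hb : 0 ≤ x * star x := mul_star_self_nonneg x
  have hbs : IsSelfAdjoint (x * star x) := .of_nonneg hb
  set b := x * star x with hbdef
  have hspec : ∀ t ∈ spectrum ℝ b, 0 ≤ t := fun t ht => spectrum_nonneg_of_nonneg hb ht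
  have hfc : ContinuousOn (afun n) (spectrum ℝ b) := afun_contOn n hspec
  have hc_id : ContinuousOn (fun t : ℝ => t) (spectrum ℝ b) := continuousOn_id
  set e := cfc (afun n) b with hedef
  have he : IsSelfAdjoint e := cfc_predicate (afun n) b
  set y := x - e * x with hydef
  have m1 : cfc (fun t => t * afun n t) b = b * e := by
    rw [cfc_mul _ _ b hc_id hfc, cfc_id' ℝ b]
  have m2 : cfc (fun t => afun n t * t) b = e * b := by
    rw [cfc_mul _ _ b hfc hc_id, cfc_id' ℝ b]
  have m3 : cfc (fun t => afun n t * (t * afun n t)) b = e * (b * e) := by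
    rw [cfc_mul _ (fun t => t * afun n t) b hfc (hc_id.mul hfc), cfc_mul _ _ b hc_id hfc, cfc_id' ℝ b]
  have hyy : y * star y = cfc (fun t => t * (1 - afun n t)^2) b := by
    have h0 : cfc (fun t : ℝ => t * (1 - afun n t)^2) b
        = cfc (fun t : ℝ => (t - t * afun n t) - (afun n t * t - afun n t * (t * afun n t))) b := by
      apply cfc_congr; intro t _; ring
    have s1 := cfc_sub (fun t : ℝ => t - t * afun n t)
      (fun t : ℝ => afun n t * t - afun n t * (t * afun n t)) b
      (hc_id.sub (hc_id.mul hfc)) ((hfc.mul hc_id).sub (hfc.mul (hc_id.mul hfc)))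
    have s2 := cfc_sub (fun t : ℝ => t) (fun t : ℝ => t * afun n t) b hc_id (hc_id.mul hfc)
    have s3 := cfc_sub (fun t : ℝ => afun n t * t) (fun t : ℝ => afun n t * (t * afun n t)) b
      (hfc.mul hc_id) (hfc.mul (hc_id.mul hfc))
    rw [h0, s1, s2, s3, m1, m2, m3, cfc_id' ℝ b]
    have hsy : star y = star x - star x * e := by
      rw [hydef, star_sub, star_mul, he.star_eq]
    rw [hydef, hsy, hbdef]
    noncomm_ring
  have hnorm : ‖y‖^2 ≤ 1/((n:ℝ)+1) := by
    have h1 : ‖y * star y‖ = ‖y‖ * ‖y‖ := CStarRing.norm_self_mul_star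
    rw [sq, ← h1, hyy]
    apply norm_cfc_le (by positivity)
    intro t ht
    have ht0 := hspec t ht
    have h2 : 0 ≤ 1 - afun n t := by linarith [afun_le_one n ht0]
    rw [Real.norm_eq_abs, abs_of_nonneg (by positivity)]
    exact afun_bound n ht0
  exact (Real.le_sqrt (norm_nonneg y) (by positivity)).mpr hnorm

lemma approx_right (x : A) (n : ℕ) :
    ‖x - x * cfc (afun n) (star x * x)‖ ≤ Real.sqrt (1/((n:ℝ)+1)) := by
  have h := approx_left (star x) n
  rw [star_star] at h
  have he : IsSelfAdjoint (cfc (afun n) (star x * x)) := cfc_predicate (afun n) _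
  calc ‖x - x * cfc (afun n) (star x * x)‖
      = ‖star (star x - cfc (afun n) (star x * x) * star x)‖ := by
        rw [star_sub, star_mul, he.star_eq, star_star]
    _ = ‖star x - cfc (afun n) (star x * x) * star x‖ := norm_star _
    _ ≤ Real.sqrt (1/((n:ℝ)+1)) := h

lemma norm_cfc_afun_le_one (b : A) (hspec : ∀ t ∈ spectrum ℝ b, 0 ≤ t) (n : ℕ) :
    ‖cfc (afun n) b‖ ≤ 1 := by
  apply norm_cfc_le zero_le_one
  intro t ht
  have ht0 := hspec t ht
  rw [Real.norm_eq_abs, abs_of_nonneg (afun_nonneg n ht0)]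
  exact afun_le_one n ht0

lemma cfc_afun_factor (b : A) (hb_sa : IsSelfAdjoint b)
    (hspec : ∀ t ∈ spectrum ℝ b, 0 ≤ t) (n : ℕ) :
    cfc (afun n) b = b * cfc (fun t : ℝ => ((n:ℝ)+1)/(1+((n:ℝ)+1)*t)) b := by
  have hc_id : ContinuousOn (fun t : ℝ => t) (spectrum ℝ b) := continuousOn_id
  have hhc : ContinuousOn (fun t : ℝ => ((n:ℝ)+1)/(1+((n:ℝ)+1)*t)) (spectrum ℝ b) := by
    apply ContinuousOn.div (by fun_prop) (by fun_prop)
    intro t ht; have := hspec t ht; positivity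
  have h : afun n = fun t : ℝ => t * (((n:ℝ)+1)/(1+((n:ℝ)+1)*t)) := by
    funext t; unfold afun; ring
  rw [h, cfc_mul _ _ b hc_id hhc, cfc_id' ℝ b]

end Aux
end AuxJN

/-- For a closed two-sided ideal and `𝔄`-submodule `N` of a C*-algebra
`A` with compatible `𝔄`-action, `J_N = J_A ∩ N`, where `J_A` (resp. `J_N`) is the closed
linear span of the elements `(x·α)y − x(α·y)` with `x, y ∈ A` (resp. `x, y ∈ N`). -/
theorem JN_eq_JA_inter_N
    {𝔄 A : Type*}
    [NormedRing 𝔄] [StarRing 𝔄] [CStarRing 𝔄] [NormedAlgebra ℂ 𝔄] [StarModule ℂ 𝔄]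
    [CompleteSpace 𝔄]
    [NormedRing A] [StarRing A] [CStarRing A] [NormedAlgebra ℂ A] [StarModule ℂ A]
    [CompleteSpace A]
    (act : CompatibleAction 𝔄 A)
    (N : Set A) (hclosed : IsClosed N)
    (hideal_l : ∀ a : A, ∀ n ∈ N, a * n ∈ N) (hideal_r : ∀ a : A, ∀ n ∈ N, n * a ∈ N)
    (hsub : ∀ (c : ℂ), ∀ n ∈ N, c • n ∈ N) (hadd : ∀ m ∈ N, ∀ n ∈ N, m + n ∈ N)
    (hzero : (0 : A) ∈ N)
    (hmodl : ∀ (α : 𝔄), ∀ n ∈ N, act.l α n ∈ N) (hmodr : ∀ (α : 𝔄), ∀ n ∈ N, act.r n α ∈ N) :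
    closure ((Submodule.span ℂ
        {x | ∃ (α : 𝔄), ∃ a ∈ N, ∃ a' ∈ N, x = (act.r a α) * a' - a * (act.l α a')} : Set A))
      = closure ((Submodule.span ℂ
        {x | ∃ (α : 𝔄) (a a' : A), x = (act.r a α) * a' - a * (act.l α a')} : Set A)) ∩ N := by
  letI : CStarAlgebra A := ⟨⟩
  letI : PartialOrder A := CStarAlgebra.spectralOrder A
  haveI : StarOrderedRing A := CStarAlgebra.spectralOrderedRing A
  set GN : Set A :=
    {x | ∃ (α : 𝔄), ∃ a ∈ N, ∃ a' ∈ N, x = (act.r a α) * a' - a * (act.l α a')} with hGNdef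
  set GA : Set A :=
    {x | ∃ (α : 𝔄) (a a' : A), x = (act.r a α) * a' - a * (act.l α a')} with hGAdef
  have hGN_sub_N : GN ⊆ N := by
    rintro z ⟨α, a, ha, a', ha', rfl⟩
    have h1 : act.r a α * a' ∈ N := hideal_r a' _ (hmodr α a ha)
    have h2 : a * act.l α a' ∈ N := hideal_r (act.l α a') a ha
    have h3 : a * act.l α a' ∈ N := h2
    have : act.r a α * a' + (-1 : ℂ) • (a * act.l α a') ∈ N :=
      hadd _ h1 _ (hsub (-1) _ h3)
    simpa [sub_eq_add_neg] using this
  apply subset_antisymm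
  · apply Set.subset_inter
    · apply closure_mono
      apply SetLike.coe_subset_coe.mpr
      apply Submodule.span_mono
      rintro z ⟨α, a, _, a', _, rfl⟩
      exact ⟨α, a, a', rfl⟩
    · let NS : Submodule ℂ A :=
        { carrier := N
          add_mem' := fun hm hn => hadd _ hm _ hn
          zero_mem' := hzero
          smul_mem' := fun c n hn => hsub c n hn }
      have h2 : (Submodule.span ℂ GN : Set A) ⊆ N :=
        (Submodule.span_le (p := NS)).mpr hGN_sub_N
      calc closure ((Submodule.span ℂ GN : Set A)) ⊆ closure N := closure_mono h2
        _ = N := hclosed.closure_eq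
  · rintro x ⟨hxJ, hxN⟩
    have hbN : x * star x ∈ N := hideal_r (star x) x hxN
    have hcN : star x * x ∈ N := hideal_l (star x) x hxN
    have hb_nonneg : (0 : A) ≤ x * star x := mul_star_self_nonneg x
    have hc_nonneg : (0 : A) ≤ star x * x := star_mul_self_nonneg x
    have hb_spec : ∀ t ∈ spectrum ℝ (x * star x), 0 ≤ t :=
      fun t ht => spectrum_nonneg_of_nonneg hb_nonneg ht
    have hc_spec : ∀ t ∈ spectrum ℝ (star x * x), 0 ≤ t :=
      fun t ht => spectrum_nonneg_of_nonneg hc_nonneg ht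
    set e : ℕ → A := fun n => cfc (afun n) (x * star x) with hedef
    set e' : ℕ → A := fun n => cfc (afun n) (star x * x) with he'def
    have heN : ∀ n, e n ∈ N := by
      intro n
      rw [hedef]
      simp only []
      rw [cfc_afun_factor (x * star x) (.of_nonneg hb_nonneg) hb_spec n]
      exact hideal_r _ _ hbN
    have he'N : ∀ n, e' n ∈ N := by
      intro n
      rw [he'def]
      simp only []
      rw [cfc_afun_factor (star x * x) (.of_nonneg hc_nonneg) hc_spec n]
      exact hideal_r _ _ hcN
    -- the compression map sends span GA into span GN
    have hmaps : ∀ n, Set.MapsTo (fun z : A => e n * z * e' n)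
        (Submodule.span ℂ GA : Set A) (Submodule.span ℂ GN : Set A) := by
      intro n z hz
      induction hz using Submodule.span_induction with
      | mem w hw =>
        obtain ⟨α, a, a', rfl⟩ := hw
        show e n * (act.r a α * a' - a * act.l α a') * e' n ∈ (Submodule.span ℂ GN : Set A)
        have hkey : e n * (act.r a α * a' - a * act.l α a') * e' n
            = act.r (e n * a) α * (a' * e' n) - (e n * a) * act.l α (a' * e' n) := by
          rw [act.mul_r (e n) a α, act.l_mul α a' (e' n)]
          noncomm_ring
        rw [hkey]
        exact Submodule.subset_span
          ⟨α, e n * a, hideal_r a _ (heN n), a' * e' n, hideal_l a' _ (he'N n), rfl⟩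
      | zero => simpa using Submodule.zero_mem _
      | add w v _ _ hw hv =>
        show e n * (w + v) * e' n ∈ (Submodule.span ℂ GN : Set A)
        have : e n * (w + v) * e' n = e n * w * e' n + e n * v * e' n := by noncomm_ring
        rw [this]; exact Submodule.add_mem _ hw hv
      | smul c w _ hw =>
        show e n * (c • w) * e' n ∈ (Submodule.span ℂ GN : Set A)
        have : e n * (c • w) * e' n = c • (e n * w * e' n) := by
          rw [mul_smul_comm, smul_mul_assoc]
        rw [this]; exact Submodule.smul_mem _ _ hw
    have hcont : ∀ n, Continuous (fun z : A => e n * z * e' n) := by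
      intro n
      exact (continuous_mul_left (e n)).mul continuous_const
    have hmem : ∀ n, e n * x * e' n ∈ closure ((Submodule.span ℂ GN : Set A)) := by
      intro n
      have := (hmaps n).closure (hcont n)
      exact this hxJ
    -- convergence
    have hnorm_e : ∀ n, ‖e n‖ ≤ 1 := fun n => norm_cfc_afun_le_one _ hb_spec n
    have hbound : ∀ n : ℕ, ‖e n * x * e' n - x‖ ≤ 2 * Real.sqrt (1/((n:ℝ)+1)) := by
      intro n
      have h1 : ‖x - e n * x‖ ≤ Real.sqrt (1/((n:ℝ)+1)) := approx_left x n
      have h2 : ‖x - x * e' n‖ ≤ Real.sqrt (1/((n:ℝ)+1)) := approx_right x n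
      have h3 : ‖e n * x - e n * x * e' n‖ ≤ Real.sqrt (1/((n:ℝ)+1)) := by
        have : e n * x - e n * x * e' n = e n * (x - x * e' n) := by noncomm_ring
        rw [this]
        calc ‖e n * (x - x * e' n)‖ ≤ ‖e n‖ * ‖x - x * e' n‖ := norm_mul_le _ _
          _ ≤ 1 * Real.sqrt (1/((n:ℝ)+1)) :=
            mul_le_mul (hnorm_e n) h2 (norm_nonneg _) zero_le_one
          _ = Real.sqrt (1/((n:ℝ)+1)) := one_mul _
      calc ‖e n * x * e' n - x‖ = ‖(x - e n * x) + (e n * x - e n * x * e' n)‖ := by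
            rw [← norm_neg]; congr 1; noncomm_ring
        _ ≤ ‖x - e n * x‖ + ‖e n * x - e n * x * e' n‖ := norm_add_le _ _
        _ ≤ 2 * Real.sqrt (1/((n:ℝ)+1)) := by linarith
    have htend : Filter.Tendsto (fun n : ℕ => e n * x * e' n) Filter.atTop (nhds x) := by
      rw [tendsto_iff_norm_sub_tendsto_zero]
      apply squeeze_zero (fun n => norm_nonneg _) hbound
      have h0 : Filter.Tendsto (fun n : ℕ => 1/((n:ℝ)+1)) Filter.atTop (nhds 0) :=
        tendsto_one_div_add_atTop_nhds_zero_nat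
      have h1 : Filter.Tendsto (fun n : ℕ => Real.sqrt (1/((n:ℝ)+1))) Filter.atTop (nhds 0) := by
        have h2 := (Real.continuous_sqrt.tendsto 0).comp h0
        rw [show Real.sqrt 0 = 0 by simp] at h2
        exact h2
      simpa using h1.const_mul 2
    exact isClosed_closure.mem_of_tendsto htend (Filter.Eventually.of_forall hmem)
end
end

section
/- Let N be a closed two-sided ideal and 𝔄-submodule of a C*-algebra A with compatible 𝔄-action, and q: A → A/N the quotient map. Then q(J_A) ⊆ J_{A/N}, the induced map q̃: A/J_A → (A/N)/J_{A/N} is a well-defined surjective *-homomorphism, the inclusion ι: N/J_N → A/J_A is injective, and ker(q̃) = ι(N/J_N). Consequently (A/J_A)/(N/J_N) ≅ (A/N)/J_{A/N}. -/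
open scoped TensorProduct
noncomputable section

lemma cfc_approx_aux {A : Type*} [NormedRing A] [StarRing A] [CStarRing A]
    [NormedAlgebra ℂ A] [StarModule ℂ A] [CompleteSpace A] (m : A) {t : ℝ} (ht : 0 < t) :
    ∃ u w : A, IsSelfAdjoint u ∧ ‖1 - u‖ ≤ 1 ∧ ‖u * m‖ ≤ Real.sqrt t ∧
      1 - u = (m * star m) * w ∧ 1 - u = w * (m * star m) := by
  letI : CStarAlgebra A := { }
  letI := CStarAlgebra.spectralOrder A
  haveI := CStarAlgebra.spectralOrderedRing A
  set h : A := m * star m with hh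
  have h0 : (0:A) ≤ h := mul_star_self_nonneg m
  have hsa : IsSelfAdjoint h := h0.isSelfAdjoint
  have hsp : ∀ x ∈ spectrum ℝ h, 0 ≤ x := spectrum_nonneg_of_nonneg h0
  have htx : ∀ x ∈ spectrum ℝ h, 0 < t + x := fun x hx => by have := hsp x hx; linarith
  set f : ℝ → ℝ := fun s => t / (t + s) with hf
  set g : ℝ → ℝ := fun s => (t + s)⁻¹ with hg
  have cf : ContinuousOn f (spectrum ℝ h) :=
    ContinuousOn.div continuousOn_const (by fun_prop) (fun x hx => (htx x hx).ne')
  have cg : ContinuousOn g (spectrum ℝ h) :=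
    ContinuousOn.inv₀ (by fun_prop) (fun x hx => (htx x hx).ne')
  set u : A := cfc f h with hu
  set w : A := cfc g h with hw
  have husa : IsSelfAdjoint u := cfc_predicate f h
  -- 1 - u = cfc (1 - f)
  have h1u : 1 - u = cfc (fun s => 1 - f s) h := by
    rw [cfc_sub (fun _ => (1:ℝ)) f h continuousOn_const cf, cfc_const_one ℝ h]
  -- norm bound on 1 - u
  have hnorm1u : ‖1 - u‖ ≤ 1 := by
    rw [h1u]
    apply norm_cfc_le zero_le_one
    intro x hx
    have hx0 := hsp x hx
    have hx1 := htx x hx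
    rw [Real.norm_eq_abs, abs_le]
    have hd1 : t / (t + x) ≤ 1 := div_le_one_of_le₀ (by linarith) hx1.le
    have hd0 : 0 ≤ t / (t + x) := div_nonneg ht.le hx1.le
    constructor
    · rw [hf]; simp only; linarith
    · rw [hf]; simp only; linarith
  -- ‖u * m‖ ≤ sqrt t
  have hum : ‖u * m‖ ≤ Real.sqrt t := by
    have e1 : u * h = cfc (fun s => f s * s) h := by
      rw [cfc_mul f (fun s => s) h cf (by fun_prop), cfc_id' ℝ h]
    have e2 : u * h * u = cfc (fun s => f s * s * f s) h := by
      rw [cfc_mul (fun s => f s * s) f h (cf.mul (by fun_prop)) cf, ← e1]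
    have e3 : ‖u * h * u‖ ≤ t := by
      rw [e2]
      apply norm_cfc_le ht.le
      intro x hx
      have hx0 := hsp x hx
      have hx1 := htx x hx
      rw [Real.norm_eq_abs, hf]
      simp only
      rw [abs_of_nonneg (by positivity)]
      have hd1 : t / (t + x) ≤ 1 := div_le_one_of_le₀ (by linarith) hx1.le
      have hd0 : 0 ≤ t / (t + x) := div_nonneg ht.le hx1.le
      have hd3 : t / (t + x) * (t + x) = t := div_mul_cancel₀ t hx1.ne'
      nlinarith [mul_nonneg hd0 hx0]
    have e4 : ‖u * m‖ * ‖u * m‖ = ‖u * h * u‖ := by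
      rw [← CStarRing.norm_self_mul_star (x := u * m)]
      congr 1
      rw [star_mul, husa.star_eq, hh]
      noncomm_ring
    rw [show Real.sqrt t = Real.sqrt t from rfl]
    have : ‖u * m‖ ^ 2 ≤ t := by rw [sq, e4]; exact e3
    have := Real.sqrt_le_sqrt this
    rwa [Real.sqrt_sq (norm_nonneg _)] at this
  -- factorizations
  have heq : Set.EqOn (fun s => 1 - f s) (fun s => s * g s) (spectrum ℝ h) := by
    intro x hx
    have hx1 := htx x hx
    simp only [hf, hg]
    field_simp
    ring
  have hfac1 : 1 - u = h * w := by
    rw [h1u, cfc_congr heq, cfc_mul (fun s => s) g h (by fun_prop) cg, cfc_id' ℝ h]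
  have hfac2 : 1 - u = w * h := by
    have heq2 : Set.EqOn (fun s => 1 - f s) (fun s => g s * s) (spectrum ℝ h) := by
      intro x hx; rw [heq hx]; simp [mul_comm]
    rw [h1u, cfc_congr heq2, cfc_mul g (fun s => s) h cg (by fun_prop), cfc_id' ℝ h]
  exact ⟨u, w, husa, hnorm1u, hum, hfac1, hfac2⟩

/-- Let `N` be a closed two-sided ideal and `𝔄`-submodule of `A`, and
`q : A → Q` a realization of the quotient `A/N`, carrying the induced `𝔄`-action.  Then
`q(J_A) ⊆ J_{A/N}`, the induced map `q̃ : A/J_A → (A/N)/J_{A/N}` is a well-defined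
surjection, the canonical map `ι : N/J_N → A/J_A` is injective, and `ker q̃ = ι(N/J_N)`;
consequently `(A/J_A)/(N/J_N) ≅ (A/N)/J_{A/N}`. -/
theorem quotient_J_ideals
    {𝔄 A Q : Type*}
    [NormedRing 𝔄] [StarRing 𝔄] [CStarRing 𝔄] [NormedAlgebra ℂ 𝔄] [StarModule ℂ 𝔄]
    [CompleteSpace 𝔄]
    [NormedRing A] [StarRing A] [CStarRing A] [NormedAlgebra ℂ A] [StarModule ℂ A]
    [CompleteSpace A]
    [NormedRing Q] [StarRing Q] [CStarRing Q] [NormedAlgebra ℂ Q] [StarModule ℂ Q]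
    [CompleteSpace Q]
    (actA : CompatibleAction 𝔄 A) (actQ : CompatibleAction 𝔄 Q)
    (N : Set A) (hclosed : IsClosed N)
    (hideal_l : ∀ a : A, ∀ n ∈ N, a * n ∈ N) (hideal_r : ∀ a : A, ∀ n ∈ N, n * a ∈ N)
    (hsub : ∀ (c : ℂ), ∀ n ∈ N, c • n ∈ N) (hadd : ∀ m ∈ N, ∀ n ∈ N, m + n ∈ N)
    (hzero : (0 : A) ∈ N)
    (hmodl : ∀ (α : 𝔄), ∀ n ∈ N, actA.l α n ∈ N) (hmodr : ∀ (α : 𝔄), ∀ n ∈ N, actA.r n α ∈ N)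
    -- `q : A → Q` realizes `A/N`, as an `𝔄`-module map:
    (q : A →⋆ₐ[ℂ] Q) (hqsurj : Function.Surjective q)
    (hqker : ∀ a : A, q a = 0 ↔ a ∈ N)
    (hqnorm : ∀ a : A, ‖q a‖ = Metric.infDist a N)
    (hqmod : IsModuleMap actA actQ q) :
    -- the three closed ideals `J_A ⊆ A`, `J_{A/N} ⊆ Q`, `J_N ⊆ N`:
    letI JA : Set A := closure ((Submodule.span ℂ
      {x | ∃ (α : 𝔄) (a a' : A), x = (actA.r a α) * a' - a * (actA.l α a')} : Set A))
    letI JQ : Set Q := closure ((Submodule.span ℂ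
      {x | ∃ (α : 𝔄) (y y' : Q), x = (actQ.r y α) * y' - y * (actQ.l α y')} : Set Q))
    letI JN : Set A := closure ((Submodule.span ℂ
      {x | ∃ (α : 𝔄), ∃ a ∈ N, ∃ a' ∈ N, x = (actA.r a α) * a' - a * (actA.l α a')} : Set A))
    -- (1) `q(J_A) ⊆ J_{A/N}`, so `q̃ : A/J_A → (A/N)/J_{A/N}` is well defined;
    (∀ a ∈ JA, q a ∈ JQ) ∧
    -- (2) `q̃` is surjective;
    (∀ y : Q, ∃ a : A, q a = y) ∧
    -- (3) `ι : N/J_N → A/J_A` is injective (i.e. `J_A ∩ N ⊆ J_N`);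
    (∀ n ∈ N, n ∈ JA → n ∈ JN) ∧
    -- (4) `ker q̃ = ι(N/J_N)`, giving `(A/J_A)/(N/J_N) ≅ (A/N)/J_{A/N}`:
    (∀ a : A, q a ∈ JQ ↔ a ∈ closure {x : A | ∃ n ∈ N, ∃ j ∈ JA, x = n + j}) := by
  set GA : Set A := {x | ∃ (α : 𝔄) (a a' : A), x = (actA.r a α) * a' - a * (actA.l α a')}
    with hGA
  set GQ : Set Q := {x | ∃ (α : 𝔄) (y y' : Q), x = (actQ.r y α) * y' - y * (actQ.l α y')}
    with hGQ
  set GN : Set A :=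
    {x | ∃ (α : 𝔄), ∃ a ∈ N, ∃ a' ∈ N, x = (actA.r a α) * a' - a * (actA.l α a')} with hGN
  set JA : Set A := closure (Submodule.span ℂ GA : Set A) with hJA
  set JQ : Set Q := closure (Submodule.span ℂ GQ : Set Q) with hJQ
  set JN : Set A := closure (Submodule.span ℂ GN : Set A) with hJN
  -- q is 1-Lipschitz, hence continuous
  have hqle : ∀ a : A, ‖q a‖ ≤ ‖a‖ := by
    intro a
    rw [hqnorm a]
    calc Metric.infDist a N ≤ dist a 0 := Metric.infDist_le_dist_of_mem hzero
    _ = ‖a‖ := by rw [dist_zero_right]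
  have hqcont : Continuous q := by
    apply AddMonoidHomClass.continuous_of_bound q 1
    intro x; rw [one_mul]; exact hqle x
  -- q maps the span of GA into the span of GQ
  have hspanmap : ∀ s ∈ Submodule.span ℂ GA, q s ∈ Submodule.span ℂ GQ := by
    intro s hs
    have : Submodule.span ℂ GA ≤ (Submodule.span ℂ GQ).comap
        (q.toAlgHom.toLinearMap) := by
      rw [Submodule.span_le]
      rintro x ⟨α, a, a', rfl⟩
      simp only [SetLike.mem_coe, Submodule.mem_comap, AlgHom.toLinearMap_apply,
        StarAlgHom.coe_toAlgHom]
      apply Submodule.subset_span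
      refine ⟨α, q a, q a', ?_⟩
      rw [map_sub, map_mul, map_mul, hqmod.1, hqmod.2]
    exact this hs
  -- (1)
  have part1 : ∀ a ∈ JA, q a ∈ JQ := by
    intro a ha
    have h1 : q a ∈ closure (q '' (Submodule.span ℂ GA : Set A)) :=
      image_closure_subset_closure_image hqcont ⟨a, ha, rfl⟩
    refine closure_mono ?_ h1
    rintro _ ⟨s, hs, rfl⟩
    exact hspanmap s hs
  refine ⟨part1, hqsurj, ?_, ?_⟩
  -- (3)
  · intro n hnN hnJA
    rw [hJN, Metric.mem_closure_iff]
    intro ε hε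
    set δ : ℝ := ε / 4 with hδ
    have hδ0 : 0 < δ := by positivity
    have ht : (0:ℝ) < δ ^ 2 := by positivity
    obtain ⟨u, w, husa, hu1, hum, hfac1, -⟩ := cfc_approx_aux n ht
    obtain ⟨u', w', husa', hu1', hum', -, hfac2'⟩ := cfc_approx_aux (star n) ht
    rw [star_star] at hfac2'
    rw [Real.sqrt_sq hδ0.le] at hum hum'
    set e : A := 1 - u with he
    set e' : A := 1 - u' with he'
    have heN : e ∈ N := by
      rw [hfac1, mul_assoc]
      exact hideal_r _ n hnN
    have he'N : e' ∈ N := by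
      rw [hfac2', ← mul_assoc]
      exact hideal_l _ n hnN
    -- choose j in span GA close to n
    have hnc := Metric.mem_closure_iff.mp hnJA δ hδ0
    obtain ⟨j, hj, hjd⟩ := hnc
    -- e * j * e' lies in span GN
    have hkey : e * j * e' ∈ Submodule.span ℂ GN := by
      have hle : Submodule.span ℂ GA ≤ (Submodule.span ℂ GN).comap
          ((LinearMap.mulLeft ℂ e).comp (LinearMap.mulRight ℂ e')) := by
        rw [Submodule.span_le]
        rintro x ⟨α, a, a', rfl⟩
        simp only [SetLike.mem_coe, Submodule.mem_comap, LinearMap.coe_comp,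
          Function.comp_apply, LinearMap.mulRight_apply, LinearMap.mulLeft_apply]
        apply Submodule.subset_span
        refine ⟨α, e * a, hideal_r a e heN, a' * e', hideal_l a' e' he'N, ?_⟩
        rw [actA.mul_r, actA.l_mul]
        noncomm_ring
      have := hle hj
      simpa only [Submodule.mem_comap, LinearMap.coe_comp, Function.comp_apply,
        LinearMap.mulRight_apply, LinearMap.mulLeft_apply, ← mul_assoc] using this
    refine ⟨e * j * e', hkey, ?_⟩
    -- distance estimate
    have hd1 : ‖u * n‖ ≤ δ := hum
    have hd2 : ‖n * u'‖ ≤ δ := by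
      calc ‖n * u'‖ = ‖star (n * u')‖ := (norm_star _).symm
      _ = ‖u' * star n‖ := by rw [star_mul, husa'.star_eq]
      _ ≤ δ := hum'
    have hsplit : n - e * n * e' = u * n + e * (n * u') := by
      rw [he, he']; noncomm_ring
    have hest1 : ‖n - e * n * e'‖ ≤ 2 * δ := by
      rw [hsplit]
      calc ‖u * n + e * (n * u')‖ ≤ ‖u * n‖ + ‖e * (n * u')‖ := norm_add_le _ _
      _ ≤ ‖u * n‖ + ‖e‖ * ‖n * u'‖ := add_le_add le_rfl (norm_mul_le _ _)
      _ ≤ δ + 1 * δ := add_le_add hd1 (mul_le_mul hu1 hd2 (norm_nonneg _) zero_le_one)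
      _ = 2 * δ := by ring
    have hest2 : ‖e * (n - j) * e'‖ ≤ δ := by
      have hnj : ‖n - j‖ ≤ δ := by rw [← dist_eq_norm]; exact hjd.le
      calc ‖e * (n - j) * e'‖ ≤ ‖e * (n - j)‖ * ‖e'‖ := norm_mul_le _ _
      _ ≤ ‖e‖ * ‖n - j‖ * ‖e'‖ :=
          mul_le_mul_of_nonneg_right (norm_mul_le _ _) (norm_nonneg _)
      _ ≤ 1 * δ * 1 :=
          mul_le_mul (mul_le_mul hu1 hnj (norm_nonneg _) zero_le_one) hu1'
            (norm_nonneg _) (by positivity)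
      _ = δ := by ring
    have : dist n (e * j * e') ≤ 3 * δ := by
      rw [dist_eq_norm]
      have : n - e * j * e' = (n - e * n * e') + e * (n - j) * e' := by noncomm_ring
      rw [this]
      calc ‖(n - e * n * e') + e * (n - j) * e'‖
          ≤ ‖n - e * n * e'‖ + ‖e * (n - j) * e'‖ := norm_add_le _ _
      _ ≤ 2 * δ + δ := add_le_add hest1 hest2
      _ = 3 * δ := by ring
    calc dist n (e * j * e') ≤ 3 * δ := this
    _ < ε := by rw [hδ]; linarith
  -- (4)
  · intro a
    constructor
    · intro hqa
      rw [Metric.mem_closure_iff]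
      intro ε hε
      obtain ⟨y, hy, hyd⟩ := Metric.mem_closure_iff.mp hqa (ε/2) (by positivity)
      -- y = q s with s ∈ span GA
      have hyx : y ∈ Submodule.map q.toAlgHom.toLinearMap (Submodule.span ℂ GA) := by
        have hle : Submodule.span ℂ GQ ≤
            Submodule.map q.toAlgHom.toLinearMap (Submodule.span ℂ GA) := by
          rw [Submodule.span_le]
          rintro x ⟨α, yy, yy', rfl⟩
          obtain ⟨b, rfl⟩ := hqsurj yy
          obtain ⟨b', rfl⟩ := hqsurj yy'
          refine ⟨actA.r b α * b' - b * actA.l α b', Submodule.subset_span ⟨α, b, b', rfl⟩, ?_⟩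
          simp only [AlgHom.toLinearMap_apply, StarAlgHom.coe_toAlgHom]
          rw [map_sub, map_mul, map_mul, hqmod.1, hqmod.2]
        exact hle hy
      obtain ⟨s, hs, rfl⟩ := hyx
      simp only [AlgHom.toLinearMap_apply, StarAlgHom.coe_toAlgHom] at hyd ⊢
      have : Metric.infDist (a - s) N < ε/2 := by
        rw [← hqnorm, map_sub, ← dist_eq_norm]
        exact hyd
      obtain ⟨n₀, hn₀, hdn₀⟩ := (Metric.infDist_lt_iff ⟨0, hzero⟩).mp this
      refine ⟨n₀ + s, ⟨n₀, hn₀, s, subset_closure hs, rfl⟩, ?_⟩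
      calc dist a (n₀ + s) = dist (a - s) n₀ := by
            rw [dist_eq_norm, dist_eq_norm]; congr 1; abel
      _ < ε/2 := hdn₀
      _ < ε := by linarith
    · intro ha
      have h1 : q a ∈ closure (q '' {x : A | ∃ n ∈ N, ∃ j ∈ JA, x = n + j}) :=
        image_closure_subset_closure_image hqcont ⟨a, ha, rfl⟩
      have h2 : q '' {x : A | ∃ n ∈ N, ∃ j ∈ JA, x = n + j} ⊆ JQ := by
        rintro _ ⟨x, ⟨n, hn, j, hj, rfl⟩, rfl⟩
        rw [map_add, (hqker n).mpr hn, zero_add]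
        exact part1 j hj
      have := closure_mono h2 h1
      rwa [IsClosed.closure_eq isClosed_closure] at this
end
end

section
/- Let u = u_* be a self-adjoint map in D_𝔄(A,B). Then ‖u‖_{𝔄-dec} = inf{‖u₁ + u₂‖ : u₁, u₂ ∈ CP_𝔄(A,B), u = u₁ − u₂}. -/
open scoped TensorProduct
noncomputable section

section Dec

variable {𝔄 A B : Type*}
  [NormedRing 𝔄] [StarRing 𝔄] [CStarRing 𝔄] [NormedAlgebra ℂ 𝔄] [StarModule ℂ 𝔄]
  [CompleteSpace 𝔄]
  [NormedRing A] [StarRing A] [CStarRing A] [NormedAlgebra ℂ A] [StarModule ℂ A]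
  [CompleteSpace A]
  [NormedRing B] [StarRing B] [CStarRing B] [NormedAlgebra ℂ B] [StarModule ℂ B]
  [CompleteSpace B]

/-- The adjoint map `u_* (a) = u(a*)*`. -/
def adjMap (u : A → B) : A → B := fun a => star (u (star a))

/-- The `2×2` matrix map `V = [[S₁, u], [u_*, S₂]] : A → M₂(B)`. -/
def Vmat (S₁ u S₂ : A → B) : A → Matrix (Fin 2) (Fin 2) B :=
  fun a => !![S₁ a, u a; adjMap u a, S₂ a]

/-- A completely positive `𝔄`-bimodule map. -/
def IsCPModuleMap (actA : CompatibleAction 𝔄 A) (actB : CompatibleAction 𝔄 B)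
    (u : A → B) : Prop :=
  IsCP u ∧ IsModuleMap actA actB u

/-- The set of values `max{‖S₁‖, ‖S₂‖}` over all decompositions of `u` witnessing
membership in `D_𝔄(A,B)` (Haagerup). -/
def decSet (actA : CompatibleAction 𝔄 A) (actB : CompatibleAction 𝔄 B)
    (u : A →L[ℂ] B) : Set ℝ :=
  {m | ∃ S₁ S₂ : A →L[ℂ] B, IsCPModuleMap actA actB S₁ ∧ IsCPModuleMap actA actB S₂ ∧
      IsCP (Vmat S₁ u S₂) ∧ m = max ‖S₁‖ ‖S₂‖}

/-- `u ∈ D_𝔄(A, B)`: `u` is `𝔄`-decomposable. -/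
def IsDecomposable (actA : CompatibleAction 𝔄 A) (actB : CompatibleAction 𝔄 B)
    (u : A →L[ℂ] B) : Prop :=
  (decSet actA actB u).Nonempty

/-- The `𝔄`-decomposable norm `‖u‖_{𝔄-dec}`. -/
def decNorm (actA : CompatibleAction 𝔄 A) (actB : CompatibleAction 𝔄 B)
    (u : A →L[ℂ] B) : ℝ :=
  sInf (decSet actA actB u)

end Dec


set_option linter.unusedSectionVars false
set_option maxHeartbeats 1000000

open scoped InnerProductSpace
open Matrix


-- Abstract C*-algebra lemma: a finite sum of star-squares is a star-square.
lemma sum_star_mul_self_eq' {C : Type*} [NormedRing C] [StarRing C] [CStarRing C]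
    [NormedAlgebra ℂ C] [StarModule ℂ C] [CompleteSpace C]
    {ι : Type*} [Fintype ι] (g : ι → C) :
    ∃ s : C, ∑ t, star (g t) * g t = star s * s := by
  letI : CStarAlgebra C :=
    { ‹NormedRing C›, ‹StarRing C›, ‹CStarRing C›, ‹NormedAlgebra ℂ C›, ‹StarModule ℂ C› with
      toCompleteSpace := ‹CompleteSpace C› }
  letI := CStarAlgebra.spectralOrder C
  letI := CStarAlgebra.spectralOrderedRing C
  have h0 : (0 : C) ≤ ∑ t, star (g t) * g t :=
    Finset.sum_nonneg fun t _ => star_mul_self_nonneg (g t)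
  refine ⟨CFC.sqrt (∑ t, star (g t) * g t), ?_⟩
  have hs : (0 : C) ≤ CFC.sqrt (∑ t, star (g t) * g t) := CFC.sqrt_nonneg _
  have hsa : IsSelfAdjoint (CFC.sqrt (∑ t, star (g t) * g t)) := .of_nonneg hs
  rw [hsa.star_eq, CFC.sqrt_mul_sqrt_self _ h0]

section MatrixCStar


variable {B : Type*} [CStarAlgebra B] [PartialOrder B] [StarOrderedRing B]
variable {m : Type*} [Fintype m] [DecidableEq m]

namespace MatCStar

/-- matrix action on the standard Hilbert module. -/
noncomputable def toCLM (X : Matrix m m B) :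
    WithCStarModule B (m → B) →L[ℂ] WithCStarModule B (m → B) :=
  LinearMap.mkContinuous
    { toFun := fun v => (WithCStarModule.equiv B _).symm
        (Matrix.vecMul (WithCStarModule.equiv B (m → B) v) Xᴴ)
      map_add' := fun v w => by
        apply (WithCStarModule.equiv B (m → B)).injective
        ext i
        simp [Matrix.vecMul, dotProduct, Finset.sum_add_distrib, add_mul]
      map_smul' := fun c v => by
        apply (WithCStarModule.equiv B (m → B)).injective
        ext i
        simp [Matrix.vecMul, dotProduct, Finset.smul_sum, smul_mul_assoc] }
    (∑ i, ∑ j, ‖X i j‖)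
    (by
      intro v
      simp only [LinearMap.coe_mk, AddHom.coe_mk]
      refine le_trans (WithCStarModule.pi_norm_le_sum_norm _) ?_
      rw [Finset.sum_mul]
      refine Finset.sum_le_sum fun i _ => ?_
      rw [WithCStarModule.equiv_symm_pi_apply]
      simp only [Matrix.vecMul, dotProduct, Matrix.conjTranspose_apply]
      refine le_trans (norm_sum_le _ _) ?_
      rw [Finset.sum_mul]
      refine Finset.sum_le_sum fun j _ => ?_
      rw [mul_comm ‖X i j‖]
      refine le_trans (norm_mul_le _ _) ?_
      rw [norm_star]
      exact mul_le_mul_of_nonneg_right (WithCStarModule.norm_apply_le_norm _ _) (norm_nonneg _))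

lemma toCLM_apply (X : Matrix m m B) (v : WithCStarModule B (m → B)) (i : m) :
    (toCLM X v) i = ∑ j, v j * star (X i j) := by
  simp [toCLM, LinearMap.mkContinuous_apply, Matrix.vecMul, dotProduct,
    WithCStarModule.equiv_symm_pi_apply, Matrix.conjTranspose_apply]

lemma norm_toCLM_le (X : Matrix m m B) : ‖toCLM X‖ ≤ ∑ i, ∑ j, ‖X i j‖ :=
  LinearMap.mkContinuous_norm_le _
    (Finset.sum_nonneg fun _ _ => Finset.sum_nonneg fun _ _ => norm_nonneg _) _

lemma toCLM_add (X Y : Matrix m m B) : toCLM (X + Y) = toCLM X + toCLM Y := by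
  ext v i
  simp [toCLM_apply, WithCStarModule.add_apply, Matrix.add_apply, Finset.sum_add_distrib, mul_add]

lemma toCLM_zero : toCLM (0 : Matrix m m B) = 0 := by
  ext v i
  simp [toCLM_apply]

lemma toCLM_smul (c : ℂ) (X : Matrix m m B) : toCLM (c • X) = (starRingEnd ℂ c) • toCLM X := by
  ext v i
  simp [toCLM_apply, WithCStarModule.smul_apply, Matrix.smul_apply, Finset.smul_sum, star_smul,
    mul_smul_comm]

lemma toCLM_mul (X Y : Matrix m m B) : toCLM (X * Y) = (toCLM X).comp (toCLM Y) := by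
  ext v i
  simp only [toCLM_apply, ContinuousLinearMap.comp_apply, Matrix.mul_apply, star_sum,
    StarMul.star_mul, Finset.sum_mul, Finset.mul_sum, mul_assoc]
  rw [Finset.sum_comm]

lemma toCLM_neg (X : Matrix m m B) : toCLM (-X) = -(toCLM X) := by
  ext v i
  simp [toCLM_apply, WithCStarModule.neg_apply, Matrix.neg_apply, mul_neg, Finset.sum_neg_distrib]

/-- single vector -/
noncomputable def sing (j : m) (b : B) : WithCStarModule B (m → B) :=
  (WithCStarModule.equiv B (m → B)).symm (Pi.single j b)

lemma toCLM_sing (X : Matrix m m B) (j : m) (b : B) (i : m) :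
    (toCLM X (sing j b)) i = b * star (X i j) := by
  rw [toCLM_apply]
  rw [Finset.sum_eq_single j]
  · simp [sing, WithCStarModule.equiv_symm_pi_apply]
  · intro k _ hk
    simp [sing, WithCStarModule.equiv_symm_pi_apply, Pi.single_eq_of_ne hk]
  · simp

lemma toCLM_injective : Function.Injective (toCLM (B := B) (m := m)) := by
  intro X Y h
  ext i j
  have := congrArg (fun f => (f (sing j 1)) i) h
  simpa [toCLM_sing] using this

lemma inner_toCLM_left (X : Matrix m m B) (v w : WithCStarModule B (m → B)) :
    ⟪toCLM X v, w⟫_B = ⟪v, toCLM Xᴴ w⟫_B := by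
  simp only [WithCStarModule.pi_inner, WithCStarModule.inner_def, toCLM_apply]
  simp only [star_sum, StarMul.star_mul, Finset.sum_mul, Finset.mul_sum, star_star]
  rw [Finset.sum_comm]
  refine Finset.sum_congr rfl fun j _ => Finset.sum_congr rfl fun i _ => ?_
  simp [Matrix.conjTranspose_apply, mul_assoc]

noncomputable def matNorm : Norm (Matrix m m B) := ⟨fun X => ‖toCLM X‖⟩

@[reducible]
noncomputable def matNACG : NormedAddCommGroup (Matrix m m B) :=
  AddGroupNorm.toNormedAddCommGroup
    { toFun := fun X => ‖toCLM X‖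
      map_zero' := by
        show ‖toCLM (0 : Matrix m m B)‖ = 0
        rw [toCLM_zero]; exact ContinuousLinearMap.opNorm_zero
      add_le' := fun X Y => by
        show ‖toCLM (X + Y)‖ ≤ ‖toCLM X‖ + ‖toCLM Y‖
        rw [toCLM_add]; exact ContinuousLinearMap.opNorm_add_le _ _
      neg' := fun X => by
        show ‖toCLM (-X)‖ = ‖toCLM X‖
        rw [toCLM_neg]; exact ContinuousLinearMap.opNorm_neg _
      eq_zero_of_map_eq_zero' := fun X hX => by
        apply toCLM_injective (B := B) (m := m)
        rw [toCLM_zero]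
        exact (ContinuousLinearMap.opNorm_zero_iff _).mp hX }

@[reducible]
noncomputable def matNormedRing : NormedRing (Matrix m m B) :=
  letI := matNACG (B := B) (m := m)
  { dist_eq := fun X Y => rfl
    norm_mul_le := fun X Y => by
      show ‖toCLM (X * Y)‖ ≤ ‖toCLM X‖ * ‖toCLM Y‖
      rw [toCLM_mul]
      exact ContinuousLinearMap.opNorm_comp_le _ _ }

@[reducible]
noncomputable def matNormedAlgebra :
    letI := matNormedRing (B := B) (m := m)
    NormedAlgebra ℂ (Matrix m m B) :=
  letI := matNormedRing (B := B) (m := m)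
  { norm_smul_le := fun c X => by
      show ‖toCLM (c • X)‖ ≤ ‖c‖ * ‖toCLM X‖
      rw [toCLM_smul]
      refine le_trans (ContinuousLinearMap.opNorm_smul_le _ (toCLM X)) ?_
      rw [Complex.norm_conj] }

@[reducible]
noncomputable def matCStarRing :
    letI := matNormedRing (B := B) (m := m)
    CStarRing (Matrix m m B) :=
  letI := matNormedRing (B := B) (m := m)
  { norm_mul_self_le := fun X => by
      show ‖toCLM X‖ * ‖toCLM X‖ ≤ ‖toCLM (star X * X)‖
      have key : ∀ v : WithCStarModule B (m → B),
          ‖toCLM X v‖ ≤ Real.sqrt ‖toCLM (star X * X)‖ * ‖v‖ := by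
        intro v
        have h1 : ‖toCLM X v‖ ^ 2 = ‖⟪toCLM X v, toCLM X v⟫_B‖ :=
          CStarModule.norm_sq_eq B
        have h2 : ⟪toCLM X v, toCLM X v⟫_B = ⟪v, toCLM (star X * X) v⟫_B := by
          rw [inner_toCLM_left, Matrix.star_eq_conjTranspose, toCLM_mul]
          rfl
        have h3 : ‖toCLM X v‖ ^ 2 ≤ ‖toCLM (star X * X)‖ * ‖v‖ ^ 2 := by
          rw [h1, h2]
          calc ‖⟪v, toCLM (star X * X) v⟫_B‖ ≤ ‖v‖ * ‖toCLM (star X * X) v‖ :=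
                CStarModule.norm_inner_le _
            _ ≤ ‖v‖ * (‖toCLM (star X * X)‖ * ‖v‖) := by
                refine mul_le_mul_of_nonneg_left ?_ (norm_nonneg _)
                exact ContinuousLinearMap.le_opNorm _ _
            _ = ‖toCLM (star X * X)‖ * ‖v‖ ^ 2 := by ring
        have h4 : (0:ℝ) ≤ ‖toCLM (star X * X)‖ := ContinuousLinearMap.opNorm_nonneg _
        calc ‖toCLM X v‖ = Real.sqrt (‖toCLM X v‖ ^ 2) := by
              rw [Real.sqrt_sq (norm_nonneg _)]
          _ ≤ Real.sqrt (‖toCLM (star X * X)‖ * ‖v‖ ^ 2) := Real.sqrt_le_sqrt h3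
          _ = Real.sqrt ‖toCLM (star X * X)‖ * ‖v‖ := by
              rw [Real.sqrt_mul h4, Real.sqrt_sq (norm_nonneg _)]
      have hop : ‖toCLM X‖ ≤ Real.sqrt ‖toCLM (star X * X)‖ :=
        ContinuousLinearMap.opNorm_le_bound _ (Real.sqrt_nonneg _) key
      calc ‖toCLM X‖ * ‖toCLM X‖
          ≤ Real.sqrt ‖toCLM (star X * X)‖ * Real.sqrt ‖toCLM (star X * X)‖ :=
            mul_le_mul hop hop (ContinuousLinearMap.opNorm_nonneg _) (Real.sqrt_nonneg _)
        _ = ‖toCLM (star X * X)‖ := Real.mul_self_sqrt (ContinuousLinearMap.opNorm_nonneg _) }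

lemma entry_norm_le (X : Matrix m m B) (i j : m) :
    ‖X i j‖ ≤ ‖toCLM X‖ * ‖(1 : B)‖ := by
  have h1 : X i j = star ((toCLM X (sing j 1)) i) := by rw [toCLM_sing, one_mul, star_star]
  rw [h1, norm_star]
  calc ‖(toCLM X (sing j 1)) i‖ ≤ ‖toCLM X (sing j 1)‖ :=
        WithCStarModule.norm_apply_le_norm _ _
    _ ≤ ‖toCLM X‖ * ‖sing j 1‖ := ContinuousLinearMap.le_opNorm _ _
    _ = ‖toCLM X‖ * ‖(1 : B)‖ := by
        rw [show ‖sing (B := B) j 1‖ = ‖(1:B)‖ from WithCStarModule.norm_single j 1]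

noncomputable def matCompleteSpace :
    letI := matNormedRing (B := B) (m := m)
    @CompleteSpace (Matrix m m B) PseudoMetricSpace.toUniformSpace := by
  letI := matNormedRing (B := B) (m := m)
  apply Metric.complete_of_cauchySeq_tendsto
  intro u hu
  -- entries are Cauchy
  have hent : ∀ i j, CauchySeq (fun nn => u nn i j) := by
    intro i j
    rw [Metric.cauchySeq_iff] at hu ⊢
    intro ε hε
    rcases hu (ε / (‖(1:B)‖ + 1)) (by positivity) with ⟨N, hN⟩
    refine ⟨N, fun p hp q hq => ?_⟩
    have h2 := hN p hp q hq
    have h3 : dist (u p i j) (u q i j) ≤ dist (u p) (u q) * ‖(1:B)‖ := by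
      rw [dist_eq_norm, dist_eq_norm]
      have : u p i j - u q i j = (u p - u q) i j := by simp [Matrix.sub_apply]
      rw [this]
      exact entry_norm_le _ i j
    have h4 : dist (u p) (u q) * ‖(1:B)‖ ≤ dist (u p) (u q) * (‖(1:B)‖ + 1) := by
      have := dist_nonneg (x := u p) (y := u q)
      nlinarith [norm_nonneg (1:B)]
    have h5 : dist (u p) (u q) * (‖(1:B)‖ + 1) < (ε / (‖(1:B)‖ + 1)) * (‖(1:B)‖ + 1) := by
      have hpos : (0:ℝ) < ‖(1:B)‖ + 1 := by positivity
      exact mul_lt_mul_of_pos_right h2 hpos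
    have h6 : (ε / (‖(1:B)‖ + 1)) * (‖(1:B)‖ + 1) = ε := by
      field_simp
    linarith
  -- limits of entries
  have hlim : ∀ i j, ∃ b : B, Filter.Tendsto (fun nn => u nn i j) Filter.atTop (nhds b) :=
    fun i j => cauchySeq_tendsto_of_complete (hent i j)
  choose L hL using hlim
  refine ⟨Matrix.of L, ?_⟩
  rw [Metric.tendsto_atTop]
  intro ε hε
  -- sum of entry distances tends to 0
  have hsum : Filter.Tendsto (fun nn => ∑ i, ∑ j, ‖(u nn - Matrix.of L) i j‖)
      Filter.atTop (nhds 0) := by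
    have : ∀ (i j : m), Filter.Tendsto (fun nn => ‖(u nn - Matrix.of L) i j‖)
        Filter.atTop (nhds 0) := by
      intro i j
      have : Filter.Tendsto (fun nn => u nn i j - L i j) Filter.atTop (nhds 0) := by
        simpa using (hL i j).sub_const (L i j)
      simpa [Matrix.sub_apply, Matrix.of_apply] using this.norm
    have h0 : Filter.Tendsto (fun nn => ∑ i, ∑ j, ‖(u nn - Matrix.of L) i j‖)
        Filter.atTop (nhds (∑ i : m, ∑ j : m, (0:ℝ))) := by
      refine tendsto_finset_sum _ fun i _ => tendsto_finset_sum _ fun j _ => this i j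
    simpa using h0
  rw [Metric.tendsto_atTop] at hsum
  rcases hsum ε hε with ⟨N, hN⟩
  refine ⟨N, fun nn hnn => ?_⟩
  have h7 := hN nn hnn
  have h8 : dist (u nn) (Matrix.of L) ≤ ∑ i, ∑ j, ‖(u nn - Matrix.of L) i j‖ := by
    rw [dist_eq_norm]
    exact le_trans (norm_toCLM_le _) le_rfl
  have h9 : (0:ℝ) ≤ ∑ i, ∑ j, ‖(u nn - Matrix.of L) i j‖ :=
    Finset.sum_nonneg fun _ _ => Finset.sum_nonneg fun _ _ => norm_nonneg _
  rw [Real.dist_eq, sub_zero, abs_of_nonneg h9] at h7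
  linarith

noncomputable def matCStarAlgebra : CStarAlgebra (Matrix m m B) :=
  letI i1 := matNormedRing (B := B) (m := m)
  letI i2 := matNormedAlgebra (B := B) (m := m)
  letI i3 := matCStarRing (B := B) (m := m)
  letI i4 := matCompleteSpace (B := B) (m := m)
  { i1, (inferInstance : StarRing (Matrix m m B)), i3, i2,
    (inferInstance : StarModule ℂ (Matrix m m B)) with
    toCompleteSpace := i4 }

lemma matrix_sum_star_mul_self {ι : Type*} [Fintype ι] (w : ι → Matrix m m B) :
    ∃ s : Matrix m m B, ∑ t, star (w t) * w t = star s * s := by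
  letI i1 := matNormedRing (B := B) (m := m)
  letI i2 := matNormedAlgebra (B := B) (m := m)
  letI i3 := matCStarRing (B := B) (m := m)
  letI i4 := matCompleteSpace (B := B) (m := m)
  exact sum_star_mul_self_eq' w

lemma matrix_gram {ι : Type*} [Fintype ι] (z : ι → m → B) :
    ∃ s : Matrix m m B, (Matrix.of fun i j => ∑ t, star (z t i) * z t j) = star s * s := by
  by_cases hm : Nonempty m
  · obtain ⟨i₀⟩ := hm
    set R : ι → Matrix m m B := fun t => Matrix.of fun i j => if i = i₀ then z t j else 0 with hR
    have key : ∑ t, star (R t) * R t = Matrix.of fun i j => ∑ t, star (z t i) * z t j := by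
      ext i j
      rw [Matrix.sum_apply]
      simp only [Matrix.of_apply]
      refine Finset.sum_congr rfl fun t _ => ?_
      rw [Matrix.mul_apply]
      rw [Finset.sum_eq_single i₀]
      · simp [hR, Matrix.star_apply]
      · intro l _ hl
        simp [hR, Matrix.star_apply, hl]
      · simp
    rcases matrix_sum_star_mul_self R with ⟨s, hs⟩
    exact ⟨s, by rw [← key, hs]⟩
  · refine ⟨0, ?_⟩
    ext i j
    exact absurd ⟨i⟩ hm

end MatCStar
end MatrixCStar


section AlgebraAux

/-- Row-matrix Gram factorization: the Gram matrix of a finite family is StarPos. -/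
lemma gram_starPos {R : Type*} [Ring R] [StarRing R] {k : Type*} [Fintype k] [DecidableEq k]
    (x : k → R) : StarPos (Matrix.of fun i j => star (x i) * x j) := by
  by_cases hk : Nonempty k
  · obtain ⟨i₀⟩ := hk
    refine ⟨Matrix.of fun i j => if i = i₀ then x j else 0, ?_⟩
    ext i j
    rw [Matrix.of_apply, Matrix.mul_apply]
    rw [Finset.sum_eq_single i₀]
    · simp [Matrix.star_apply]
    · intro l _ hl
      simp [Matrix.star_apply, hl]
    · simp
  · refine ⟨0, ?_⟩
    ext i j
    exact absurd ⟨i⟩ hk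

section ActLemmas

variable {𝔄 A : Type*} [NormedRing 𝔄] [StarRing 𝔄] [NormedAlgebra ℂ 𝔄]
  [NormedRing A] [StarRing A] [NormedAlgebra ℂ A]

lemma CompatibleAction.l_eq (act : CompatibleAction 𝔄 A) (α : 𝔄) (x : A) :
    act.l α x = act.l α 1 * x := by
  conv_lhs => rw [← one_mul x, act.l_mul]

lemma CompatibleAction.r_eq (act : CompatibleAction 𝔄 A) (x : A) (α : 𝔄) :
    act.r x α = x * act.r 1 α := by
  conv_lhs => rw [← mul_one x, act.mul_r]

lemma CompatibleAction.star_r_one (act : CompatibleAction 𝔄 A) (α : 𝔄) :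
    star (act.r 1 α) = act.l (star α) 1 := by
  rw [act.star_r, star_one]

lemma CompatibleAction.star_l_one (act : CompatibleAction 𝔄 A) (α : 𝔄) :
    star (act.l α 1) = act.r 1 (star α) := by
  rw [act.star_l, star_one]

end ActLemmas

section CPAux

variable {A B : Type*}
  [NormedRing A] [StarRing A] [CStarRing A] [NormedAlgebra ℂ A] [StarModule ℂ A]
  [CompleteSpace A]
  [NormedRing B] [StarRing B] [CStarRing B] [NormedAlgebra ℂ B] [StarModule ℂ B]
  [CompleteSpace B]

/-- Compression of a CP map `A → M₂(B)` by a real vector is CP. -/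
lemma isCP_compress (w : Fin 2 → ℝ) {V : A → Matrix (Fin 2) (Fin 2) B} (hV : IsCP V) :
    IsCP (fun a => ∑ p, ∑ q, ((w p : ℂ) * (w q : ℂ)) • V a p q) := by
  letI : CStarAlgebra B :=
    { ‹NormedRing B›, ‹StarRing B›, ‹CStarRing B›, ‹NormedAlgebra ℂ B›, ‹StarModule ℂ B› with
      toCompleteSpace := ‹CompleteSpace B› }
  letI := CStarAlgebra.spectralOrder B
  letI := CStarAlgebra.spectralOrderedRing B
  intro k M hM
  obtain ⟨Y, hY⟩ := hV k M hM
  have hVM : ∀ i j, V (M i j) = ∑ l, star (Y l i) * Y l j := by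
    intro i j
    have : (M.map V) i j = (star Y * Y) i j := by rw [hY]
    simpa [Matrix.map_apply, Matrix.mul_apply, Matrix.star_apply] using this
  set z : (Fin k × Fin 2) → Fin k → B :=
    fun t i => ∑ p, (w p : ℂ) • (Y t.1 i) t.2 p with hz
  have shuffle : ∀ (f : Fin 2 → Fin 2 → Fin k → Fin 2 → B),
      ∑ p, ∑ q, ∑ l, ∑ r, f p q l r = ∑ r, ∑ l, ∑ p, ∑ q, f p q l r := by
    intro f
    calc ∑ p, ∑ q, ∑ l, ∑ r, f p q l r
        = ∑ p, ∑ q, ∑ r, ∑ l, f p q l r := by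
          exact Finset.sum_congr rfl fun p _ => Finset.sum_congr rfl fun q _ =>
            Finset.sum_comm
      _ = ∑ p, ∑ r, ∑ q, ∑ l, f p q l r := by
          exact Finset.sum_congr rfl fun p _ => Finset.sum_comm
      _ = ∑ r, ∑ p, ∑ q, ∑ l, f p q l r := Finset.sum_comm
      _ = ∑ r, ∑ p, ∑ l, ∑ q, f p q l r := by
          exact Finset.sum_congr rfl fun r _ => Finset.sum_congr rfl fun p _ =>
            Finset.sum_comm
      _ = ∑ r, ∑ l, ∑ p, ∑ q, f p q l r := by
          exact Finset.sum_congr rfl fun r _ => Finset.sum_comm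
  have key : M.map (fun a => ∑ p, ∑ q, ((w p : ℂ) * (w q : ℂ)) • V a p q)
      = Matrix.of fun i j => ∑ t, star (z t i) * z t j := by
    ext i j
    rw [Matrix.map_apply, Matrix.of_apply]
    calc ∑ p, ∑ q, ((w p : ℂ) * (w q : ℂ)) • V (M i j) p q
        = ∑ p, ∑ q, ∑ l, ∑ r, ((w p : ℂ) * (w q : ℂ)) •
            (star ((Y l i) r p) * (Y l j) r q) := by
          refine Finset.sum_congr rfl fun p _ => Finset.sum_congr rfl fun q _ => ?_
          rw [hVM i j, Matrix.sum_apply, Finset.smul_sum]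
          refine Finset.sum_congr rfl fun l _ => ?_
          rw [Matrix.mul_apply, Finset.smul_sum]
          refine Finset.sum_congr rfl fun r _ => ?_
          rw [Matrix.star_apply]
      _ = ∑ r, ∑ l, ∑ p, ∑ q, ((w p : ℂ) * (w q : ℂ)) •
            (star ((Y l i) r p) * (Y l j) r q) := shuffle _
      _ = ∑ r, ∑ l, star (z (l, r) i) * z (l, r) j := by
          refine Finset.sum_congr rfl fun r _ => Finset.sum_congr rfl fun l _ => ?_
          rw [hz]
          simp only []
          rw [star_sum, Finset.sum_mul_sum]
          refine Finset.sum_congr rfl fun p _ => Finset.sum_congr rfl fun q _ => ?_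
          rw [star_smul, smul_mul_assoc, mul_smul_comm, smul_smul]
          congr 1
          simp [Complex.star_def, Complex.conj_ofReal]
      _ = ∑ l, ∑ r, star (z (l, r) i) * z (l, r) j := Finset.sum_comm
      _ = ∑ t : Fin k × Fin 2, star (z t i) * z t j := by
          rw [Fintype.sum_prod_type]
  rw [key]
  exact MatCStar.matrix_gram z

end CPAux
end AlgebraAux



section ModAux

variable {𝔄 A B : Type*}
  [NormedRing 𝔄] [StarRing 𝔄] [CStarRing 𝔄] [NormedAlgebra ℂ 𝔄] [StarModule ℂ 𝔄]
  [CompleteSpace 𝔄]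
  [NormedRing A] [StarRing A] [CStarRing A] [NormedAlgebra ℂ A] [StarModule ℂ A]
  [CompleteSpace A]
  [NormedRing B] [StarRing B] [CStarRing B] [NormedAlgebra ℂ B] [StarModule ℂ B]
  [CompleteSpace B]

-- the zero lemma at the level of B
lemma eq_zero_of_sum_star_mul_self' {ι : Type*} [Fintype ι] (g : ι → B)
    (h : ∑ t, star (g t) * g t = 0) : ∀ t, g t = 0 := by
  letI : CStarAlgebra B :=
    { ‹NormedRing B›, ‹StarRing B›, ‹CStarRing B›, ‹NormedAlgebra ℂ B›, ‹StarModule ℂ B› with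
      toCompleteSpace := ‹CompleteSpace B› }
  letI := CStarAlgebra.spectralOrder B
  letI := CStarAlgebra.spectralOrderedRing B
  intro t
  have h1 : ∀ t ∈ Finset.univ, (0:B) ≤ star (g t) * g t := fun t _ => star_mul_self_nonneg (g t)
  have := (Finset.sum_eq_zero_iff_of_nonneg h1).mp h t (Finset.mem_univ t)
  exact CStarRing.star_mul_self_eq_zero_iff _ |>.mp this

lemma Vmat_00 (S₁ uu S₂ : A → B) (a : A) : Vmat S₁ uu S₂ a 0 0 = S₁ a := rfl
lemma Vmat_01 (S₁ uu S₂ : A → B) (a : A) : Vmat S₁ uu S₂ a 0 1 = uu a := rfl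
lemma Vmat_10 (S₁ uu S₂ : A → B) (a : A) : Vmat S₁ uu S₂ a 1 0 = adjMap uu a := rfl
lemma Vmat_11 (S₁ uu S₂ : A → B) (a : A) : Vmat S₁ uu S₂ a 1 1 = S₂ a := rfl

/-- Key lemma: if `V = [[S₁, u],[u_*, S₂]]` is CP with `S₁, S₂` module maps and `u` self-adjoint,
then `u` is a module map. -/
lemma isModuleMap_of_V (actA : CompatibleAction 𝔄 A) (actB : CompatibleAction 𝔄 B)
    {S₁ S₂ u : A →L[ℂ] B}
    (hS₁ : IsModuleMap actA actB ⇑S₁) (hS₂ : IsModuleMap actA actB ⇑S₂)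
    (hV : IsCP (Vmat ⇑S₁ ⇑u ⇑S₂)) (hsa : ∀ a : A, adjMap (⇑u) a = u a) :
    IsModuleMap actA actB ⇑u := by
  set V : A → Matrix (Fin 2) (Fin 2) B := Vmat ⇑S₁ ⇑u ⇑S₂ with hVdef
  -- r-part
  have hr : ∀ (a : A) (α : 𝔄), u (actA.r a α) = actB.r (u a) α := by
    intro a α
    set fA : A := actA.r 1 α with hfA
    set fB : B := actB.r 1 α with hfB
    -- modular rewrites for S₁, S₂
    have rmul : ∀ (T : A →L[ℂ] B), IsModuleMap actA actB ⇑T →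
        ∀ x : A, T (x * fA) = T x * fB := by
      intro T hT x
      rw [hfA, ← actA.r_eq, hT.2, hfB, ← actB.r_eq]
    have lmul : ∀ (T : A →L[ℂ] B), IsModuleMap actA actB ⇑T →
        ∀ x : A, T (star fA * x) = star fB * T x := by
      intro T hT x
      rw [hfA, actA.star_r_one, ← actA.l_eq, hT.1, hfB, actB.star_r_one, ← actB.l_eq]
    set x : Fin 3 → A := ![1, a * fA, a] with hx
    set P : Matrix (Fin 3) (Fin 3) A := Matrix.of fun i j => star (x i) * x j with hP
    obtain ⟨Y, hY⟩ := hV 3 P (gram_starPos x)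
    set F : Matrix (Fin 2) (Fin 2) B := Matrix.diagonal (fun _ => fB) with hF
    set d : Fin 3 → Matrix (Fin 2) (Fin 2) B := ![1, 1, F] with hd
    set D : Matrix (Fin 3) (Fin 3) (Matrix (Fin 2) (Fin 2) B) := Matrix.diagonal d with hD
    set W : Matrix (Fin 3) (Fin 3) (Matrix (Fin 2) (Fin 2) B) := Y * D with hW
    have hstarD : star D = Matrix.diagonal (fun i => star (d i)) := by
      rw [hD, Matrix.star_eq_conjTranspose, Matrix.diagonal_conjTranspose]
      rfl
    have hG : star W * W = star D * (P.map V * D) := by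
      rw [hW, StarMul.star_mul, mul_assoc, ← mul_assoc (star Y), hY]
    have hGe : ∀ i j, (star W * W) i j = star (d i) * (V (star (x i) * x j) * d j) := by
      intro i j
      rw [hG, hstarD]
      rw [Matrix.diagonal_mul, Matrix.mul_diagonal, Matrix.map_apply, hP]
      rfl
    have hGe' : ∀ i j, (star W * W) i j = ∑ l, star (W l i) * W l j := by
      intro i j
      rw [Matrix.mul_apply]
      refine Finset.sum_congr rfl fun l _ => ?_
      rw [Matrix.star_apply]
    set dd : Fin 3 → Matrix (Fin 2) (Fin 2) B := fun l => W l 1 - W l 2 with hdd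
    -- second-order defect is a sum of star-squares
    have hEsum : ∑ l, star (dd l) * dd l
        = (star W * W) 1 1 - (star W * W) 1 2 - (star W * W) 2 1 + (star W * W) 2 2 := by
      rw [hGe' 1 1, hGe' 1 2, hGe' 2 1, hGe' 2 2]
      rw [← Finset.sum_sub_distrib, ← Finset.sum_sub_distrib, ← Finset.sum_add_distrib]
      refine Finset.sum_congr rfl fun l _ => ?_
      rw [hdd]
      simp only [star_sub]
      noncomm_ring
    -- compute the four corners of the defect
    have hx0 : x 0 = 1 := rfl
    have hx1 : x 1 = a * fA := rfl
    have hx2 : x 2 = a := rfl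
    have hd0 : d 0 = 1 := rfl
    have hd1 : d 1 = 1 := rfl
    have hd2 : d 2 = F := rfl
    -- entries of products with F
    have hmulF : ∀ (Z : Matrix (Fin 2) (Fin 2) B) (p q : Fin 2), (Z * F) p q = Z p q * fB := by
      intro Z p q
      rw [hF, Matrix.mul_diagonal]
    have hFmul : ∀ (Z : Matrix (Fin 2) (Fin 2) B) (p q : Fin 2),
        (star F * Z) p q = star fB * Z p q := by
      intro Z p q
      have : star F = Matrix.diagonal (fun _ => star fB) := by
        rw [hF, Matrix.star_eq_conjTranspose, Matrix.diagonal_conjTranspose]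
        rfl
      rw [this, Matrix.diagonal_mul]
    -- the diagonal entries of the defect vanish
    have claim : ∀ (T : A →L[ℂ] B), IsModuleMap actA actB ⇑T →
        T (star (a * fA) * (a * fA)) - T (star (a * fA) * a) * fB
          - star fB * T (star a * (a * fA)) + star fB * (T (star a * a) * fB) = 0 := by
      intro T hT
      have a1 : star (a * fA) * (a * fA) = star fA * ((star a * a) * fA) := by
        rw [StarMul.star_mul, mul_assoc, ← mul_assoc (star a)]
      have a2 : star (a * fA) * a = star fA * (star a * a) := by
        rw [StarMul.star_mul, mul_assoc]
      have a3 : star a * (a * fA) = (star a * a) * fA := (mul_assoc _ _ _).symm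
      rw [a1, a2, a3]
      simp only [lmul T hT, rmul T hT]
      noncomm_ring
    have hdiag : ∀ p : Fin 2, ((star W * W) 1 1 - (star W * W) 1 2
        - (star W * W) 2 1 + (star W * W) 2 2) p p = 0 := by
      intro p
      have hW11 : (star W * W) 1 1 = V (star (a * fA) * (a * fA)) := by
        rw [hGe 1 1, hx1, hd1]
        simp only [star_one, one_mul, mul_one]
      have hW12 : (star W * W) 1 2 = V (star (a * fA) * a) * F := by
        rw [hGe 1 2, hx1, hx2, hd1, hd2]
        simp only [star_one, one_mul, mul_one]
      have hW21 : (star W * W) 2 1 = star F * V (star a * (a * fA)) := by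
        rw [hGe 2 1, hx2, hx1, hd2, hd1]
        simp only [star_one, one_mul, mul_one]
      have hW22 : (star W * W) 2 2 = star F * (V (star a * a) * F) := by
        rw [hGe 2 2, hx2, hd2]
      rw [Matrix.add_apply, Matrix.sub_apply, Matrix.sub_apply]
      rw [hW11, hW12, hW21, hW22, hmulF, hFmul, hFmul, hmulF]
      by_cases hp : p = 0
      · subst hp
        rw [hVdef]
        rw [Vmat_00, Vmat_00, Vmat_00, Vmat_00]
        exact claim S₁ hS₁
      · have hp1 : p = 1 := by
          have h2 := p.isLt
          have h0 : p.val ≠ 0 := fun h => hp (Fin.ext h)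
          exact Fin.ext (by omega)
        subst hp1
        rw [hVdef]
        rw [Vmat_11, Vmat_11, Vmat_11, Vmat_11]
        exact claim S₂ hS₂
    -- hence the defect columns vanish
    have hsum0 : ∑ t : Fin 3 × Fin 2 × Fin 2,
        star (dd t.1 t.2.1 t.2.2) * dd t.1 t.2.1 t.2.2 = 0 := by
      rw [Fintype.sum_prod_type]
      have step : ∀ l : Fin 3, ∑ rp : Fin 2 × Fin 2,
          star (dd l rp.1 rp.2) * dd l rp.1 rp.2
          = ∑ p : Fin 2, ∑ r : Fin 2, star (dd l r p) * dd l r p := by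
        intro l
        rw [Fintype.sum_prod_type]
        exact Finset.sum_comm
      calc ∑ l : Fin 3, ∑ rp : Fin 2 × Fin 2, star (dd l rp.1 rp.2) * dd l rp.1 rp.2
          = ∑ l : Fin 3, ∑ p : Fin 2, ∑ r : Fin 2, star (dd l r p) * dd l r p :=
            Finset.sum_congr rfl fun l _ => step l
        _ = ∑ p : Fin 2, ∑ l : Fin 3, ∑ r : Fin 2, star (dd l r p) * dd l r p :=
            Finset.sum_comm
        _ = ∑ p : Fin 2, (∑ l, star (dd l) * dd l) p p := by
            refine Finset.sum_congr rfl fun p _ => ?_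
            rw [Matrix.sum_apply]
            refine Finset.sum_congr rfl fun l _ => ?_
            rw [Matrix.mul_apply]
            exact Finset.sum_congr rfl fun r _ => by rw [Matrix.star_apply]
        _ = ∑ p : Fin 2, (0:B) := by
            refine Finset.sum_congr rfl fun p _ => ?_
            rw [hEsum]
            exact hdiag p
        _ = 0 := by simp
    have hdd0 : ∀ l, dd l = 0 := by
      have h := eq_zero_of_sum_star_mul_self'
        (fun t : Fin 3 × Fin 2 × Fin 2 => dd t.1 t.2.1 t.2.2) hsum0
      intro l
      ext r p
      exact h (l, r, p)
    -- first-order consequence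
    have hfirst : (star W * W) 0 1 = (star W * W) 0 2 := by
      rw [hGe' 0 1, hGe' 0 2]
      refine Finset.sum_congr rfl fun l _ => ?_
      have : W l 1 = W l 2 := by
        have := hdd0 l
        rw [hdd] at this
        exact sub_eq_zero.mp this
      rw [this]
    have hVF : V (a * fA) = V a * F := by
      have e1 : (star W * W) 0 1 = V (a * fA) := by
        rw [hGe 0 1, hx0, hx1, hd0, hd1]
        simp only [star_one, one_mul, mul_one]
      have e2 : (star W * W) 0 2 = V a * F := by
        rw [hGe 0 2, hx0, hx2, hd0, hd2]
        simp only [star_one, one_mul, mul_one]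
      rw [← e1, ← e2, hfirst]
    have : u (a * fA) = u a * fB := by
      have := congrArg (fun Z => Z 0 1) hVF
      rw [hmulF] at this
      rw [hVdef] at this
      rw [Vmat_01, Vmat_01] at this
      exact this
    rw [actA.r_eq, actB.r_eq]
    exact this
  -- l-part
  have hstar : ∀ y : A, u (star y) = star (u y) := by
    intro y
    have h := hsa (star y)
    rw [adjMap, star_star] at h
    exact h.symm
  have hl : ∀ (α : 𝔄) (xx : A), u (actA.l α xx) = actB.l α (u xx) := by
    intro α xx
    calc u (actA.l α xx) = u (star (star (actA.l α xx))) := by rw [star_star]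
      _ = star (u (star (actA.l α xx))) := hstar _
      _ = star (u (actA.r (star xx) (star α))) := by rw [actA.star_l]
      _ = star (actB.r (u (star xx)) (star α)) := by rw [hr]
      _ = star (actB.r (star (u xx)) (star α)) := by rw [hstar]
      _ = actB.l (star (star α)) (star (star (u xx))) := by rw [actB.star_r]
      _ = actB.l α (u xx) := by rw [star_star, star_star]
  exact ⟨hl, hr⟩

end ModAux



section FinalAux

variable {𝔄 A B : Type*}
  [NormedRing 𝔄] [StarRing 𝔄] [CStarRing 𝔄] [NormedAlgebra ℂ 𝔄] [StarModule ℂ 𝔄]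
  [CompleteSpace 𝔄]
  [NormedRing A] [StarRing A] [CStarRing A] [NormedAlgebra ℂ A] [StarModule ℂ A]
  [CompleteSpace A]
  [NormedRing B] [StarRing B] [CStarRing B] [NormedAlgebra ℂ B] [StarModule ℂ B]
  [CompleteSpace B]

lemma isCP_clm_add {u₁ u₂ : A →L[ℂ] B} (h1 : IsCP ⇑u₁) (h2 : IsCP ⇑u₂) :
    IsCP ⇑(u₁ + u₂) := by
  letI : CStarAlgebra B :=
    { ‹NormedRing B›, ‹StarRing B›, ‹CStarRing B›, ‹NormedAlgebra ℂ B›, ‹StarModule ℂ B› with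
      toCompleteSpace := ‹CompleteSpace B› }
  letI := CStarAlgebra.spectralOrder B
  letI := CStarAlgebra.spectralOrderedRing B
  intro k M hM
  obtain ⟨Y₁, hY₁⟩ := h1 k M hM
  obtain ⟨Y₂, hY₂⟩ := h2 k M hM
  have hmap : M.map ⇑(u₁ + u₂) = star Y₁ * Y₁ + star Y₂ * Y₂ := by
    have : M.map ⇑(u₁ + u₂) = M.map ⇑u₁ + M.map ⇑u₂ := by
      ext i j
      simp [Matrix.map_apply, Matrix.add_apply]
    rw [this, hY₁, hY₂]
  obtain ⟨s, hs⟩ := MatCStar.matrix_sum_star_mul_self (![Y₁, Y₂])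
  refine ⟨s, ?_⟩
  rw [hmap, ← hs, Fin.sum_univ_two]
  simp

lemma isCP_Vmat_sum {u₁ u₂ u : A →L[ℂ] B} (h1 : IsCP ⇑u₁) (h2 : IsCP ⇑u₂)
    (hu : u = u₁ - u₂) (hsa : ∀ a : A, adjMap (⇑u) a = u a) :
    IsCP (Vmat ⇑(u₁ + u₂) ⇑u ⇑(u₁ + u₂)) := by
  intro k M hM
  obtain ⟨Y₁, hY₁⟩ := h1 k M hM
  obtain ⟨Y₂, hY₂⟩ := h2 k M hM
  have hu₁ : ∀ i j, u₁ (M i j) = ∑ l, star (Y₁ l i) * Y₁ l j := by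
    intro i j
    have : (M.map ⇑u₁) i j = (star Y₁ * Y₁) i j := by rw [hY₁]
    simpa [Matrix.map_apply, Matrix.mul_apply, Matrix.star_apply] using this
  have hu₂ : ∀ i j, u₂ (M i j) = ∑ l, star (Y₂ l i) * Y₂ l j := by
    intro i j
    have : (M.map ⇑u₂) i j = (star Y₂ * Y₂) i j := by rw [hY₂]
    simpa [Matrix.map_apply, Matrix.mul_apply, Matrix.star_apply] using this
  refine ⟨Matrix.of fun l j => !![Y₁ l j, Y₁ l j; Y₂ l j, -(Y₂ l j)], ?_⟩
  refine Matrix.ext fun i j => ?_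
  rw [Matrix.map_apply, Matrix.mul_apply]
  have hrw : ∀ l, (star (Matrix.of fun l j => !![Y₁ l j, Y₁ l j; Y₂ l j, -(Y₂ l j)])) i l
      * (Matrix.of fun l j => !![Y₁ l j, Y₁ l j; Y₂ l j, -(Y₂ l j)]) l j
      = !![star (Y₁ l i) * Y₁ l j + star (Y₂ l i) * Y₂ l j,
           star (Y₁ l i) * Y₁ l j - star (Y₂ l i) * Y₂ l j;
           star (Y₁ l i) * Y₁ l j - star (Y₂ l i) * Y₂ l j,
           star (Y₁ l i) * Y₁ l j + star (Y₂ l i) * Y₂ l j] := by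
    intro l
    rw [Matrix.star_apply]
    ext p q
    rw [Matrix.mul_apply, Fin.sum_univ_two]
    fin_cases p <;> fin_cases q <;>
      simp [Matrix.star_apply, mul_neg, sub_eq_add_neg]
  rw [Finset.sum_congr rfl fun l _ => hrw l]
  refine Matrix.ext fun p q => ?_
  rw [Matrix.sum_apply]
  have hadj : adjMap (⇑u) (M i j) = u₁ (M i j) - u₂ (M i j) := by
    rw [hsa (M i j), hu]
    simp
  have huapp : u (M i j) = u₁ (M i j) - u₂ (M i j) := by
    rw [hu]
    simp
  fin_cases p <;> fin_cases q <;>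
    simp [Vmat, hadj, huapp, hu₁, hu₂, Finset.sum_add_distrib, Finset.sum_sub_distrib,
      ContinuousLinearMap.add_apply, ContinuousLinearMap.sub_apply,
      Matrix.map_apply, sub_eq_add_neg]

lemma isModuleMap_comb (actA : CompatibleAction 𝔄 A) (actB : CompatibleAction 𝔄 B)
    (c₁ c₂ c₃ : ℂ) (f g h : A →L[ℂ] B)
    (hf : IsModuleMap actA actB ⇑f) (hg : IsModuleMap actA actB ⇑g)
    (hh : IsModuleMap actA actB ⇑h) :
    IsModuleMap actA actB ⇑(c₁ • f + c₂ • g + c₃ • h) := by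
  constructor
  · intro α a
    simp only [ContinuousLinearMap.add_apply, ContinuousLinearMap.coe_smul', Pi.smul_apply,
      hf.1 α a, hg.1 α a, hh.1 α a]
    have hlin : actB.l α (c₁ • f a + c₂ • g a + c₃ • h a)
        = c₁ • actB.l α (f a) + c₂ • actB.l α (g a) + c₃ • actB.l α (h a) := by
      rw [map_add, map_add, LinearMap.map_smul, LinearMap.map_smul, LinearMap.map_smul]
    rw [hlin]
  · intro a α
    simp only [ContinuousLinearMap.add_apply, ContinuousLinearMap.coe_smul', Pi.smul_apply,
      hf.2 a α, hg.2 a α, hh.2 a α]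
    have hlin : actB.r (c₁ • f a + c₂ • g a + c₃ • h a) α
        = c₁ • actB.r (f a) α + c₂ • actB.r (g a) α + c₃ • actB.r (h a) α := by
      rw [map_add, map_add, LinearMap.map_smul, LinearMap.map_smul, LinearMap.map_smul]
      rfl
    rw [hlin]

end FinalAux

/-- For a self-adjoint `u = u_*` in `D_𝔄(A,B)`,
`‖u‖_{𝔄-dec} = inf{‖u₁ + u₂‖ : u₁, u₂ ∈ CP_𝔄(A,B), u = u₁ − u₂}`. -/
theorem decNorm_selfAdjoint
    {𝔄 A B : Type*}
    [NormedRing 𝔄] [StarRing 𝔄] [CStarRing 𝔄] [NormedAlgebra ℂ 𝔄] [StarModule ℂ 𝔄]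
    [CompleteSpace 𝔄]
    [NormedRing A] [StarRing A] [CStarRing A] [NormedAlgebra ℂ A] [StarModule ℂ A]
    [CompleteSpace A]
    [NormedRing B] [StarRing B] [CStarRing B] [NormedAlgebra ℂ B] [StarModule ℂ B]
    [CompleteSpace B]
    (actA : CompatibleAction 𝔄 A) (actB : CompatibleAction 𝔄 B)
    (u : A →L[ℂ] B)
    (hdec : IsDecomposable actA actB u)
    (hsa : ∀ a : A, adjMap (⇑u) a = u a) :
    decNorm actA actB u
      = sInf {c : ℝ | ∃ u₁ u₂ : A →L[ℂ] B,
          IsCPModuleMap actA actB (⇑u₁) ∧ IsCPModuleMap actA actB (⇑u₂) ∧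
          u = u₁ - u₂ ∧ c = ‖u₁ + u₂‖} := by
  set R : Set ℝ := {c : ℝ | ∃ u₁ u₂ : A →L[ℂ] B,
      IsCPModuleMap actA actB (⇑u₁) ∧ IsCPModuleMap actA actB (⇑u₂) ∧
      u = u₁ - u₂ ∧ c = ‖u₁ + u₂‖} with hRdef
  -- Step I: from a decomposition witness, build a CP decomposition of `u`
  have stepI : ∀ m ∈ decSet actA actB u, ∃ c ∈ R, c ≤ m := by
    rintro m ⟨S₁, S₂, hS₁, hS₂, hVcp, rfl⟩
    set u₁ : A →L[ℂ] B := (4⁻¹ : ℂ) • S₁ + (4⁻¹ : ℂ) • S₂ + (2⁻¹ : ℂ) • u with hu₁def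
    set u₂ : A →L[ℂ] B := (4⁻¹ : ℂ) • S₁ + (4⁻¹ : ℂ) • S₂ + (-2⁻¹ : ℂ) • u with hu₂def
    have humod : IsModuleMap actA actB ⇑u :=
      isModuleMap_of_V actA actB hS₁.2 hS₂.2 hVcp hsa
    have hcp₁ : IsCP ⇑u₁ := by
      have h := isCP_compress (![2⁻¹, 2⁻¹] : Fin 2 → ℝ) hVcp
      have heq : (fun a => ∑ p, ∑ q,
          (((![2⁻¹, 2⁻¹] : Fin 2 → ℝ) p : ℂ) * ((![2⁻¹, 2⁻¹] : Fin 2 → ℝ) q : ℂ)) •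
            Vmat (⇑S₁) (⇑u) (⇑S₂) a p q) = ⇑u₁ := by
        funext a
        simp only [Fin.sum_univ_two, Matrix.cons_val_zero, Matrix.cons_val_one,
          Matrix.head_cons, Vmat_00, Vmat_01, Vmat_10, Vmat_11, hsa a, hu₁def,
          ContinuousLinearMap.add_apply, ContinuousLinearMap.coe_smul', Pi.smul_apply]
        push_cast
        module
      rwa [heq] at h
    have hcp₂ : IsCP ⇑u₂ := by
      have h := isCP_compress (![2⁻¹, -2⁻¹] : Fin 2 → ℝ) hVcp
      have heq : (fun a => ∑ p, ∑ q,
          (((![2⁻¹, -2⁻¹] : Fin 2 → ℝ) p : ℂ) * ((![2⁻¹, -2⁻¹] : Fin 2 → ℝ) q : ℂ)) •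
            Vmat (⇑S₁) (⇑u) (⇑S₂) a p q) = ⇑u₂ := by
        funext a
        simp only [Fin.sum_univ_two, Matrix.cons_val_zero, Matrix.cons_val_one,
          Matrix.head_cons, Vmat_00, Vmat_01, Vmat_10, Vmat_11, hsa a, hu₂def,
          ContinuousLinearMap.add_apply, ContinuousLinearMap.coe_smul', Pi.smul_apply]
        push_cast
        module
      rwa [heq] at h
    have hmod₁ : IsModuleMap actA actB ⇑u₁ :=
      isModuleMap_comb actA actB _ _ _ _ _ _ hS₁.2 hS₂.2 humod
    have hmod₂ : IsModuleMap actA actB ⇑u₂ :=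
      isModuleMap_comb actA actB _ _ _ _ _ _ hS₁.2 hS₂.2 humod
    have hdiff : u = u₁ - u₂ := by
      ext a
      simp only [hu₁def, hu₂def, ContinuousLinearMap.sub_apply,
        ContinuousLinearMap.add_apply, ContinuousLinearMap.coe_smul', Pi.smul_apply]
      module
    have hsum : u₁ + u₂ = (2⁻¹ : ℂ) • (S₁ + S₂) := by
      ext a
      simp only [hu₁def, hu₂def, ContinuousLinearMap.add_apply,
        ContinuousLinearMap.coe_smul', Pi.smul_apply]
      module
    refine ⟨‖u₁ + u₂‖, ⟨u₁, u₂, ⟨hcp₁, hmod₁⟩, ⟨hcp₂, hmod₂⟩, hdiff, rfl⟩, ?_⟩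
    rw [hsum]
    have hhalf : ‖(2⁻¹ : ℂ)‖ = 2⁻¹ := by
      rw [norm_inv]
      norm_num
    refine le_trans (ContinuousLinearMap.opNorm_smul_le _ _) ?_
    rw [hhalf]
    have h1 : ‖S₁ + S₂‖ ≤ ‖S₁‖ + ‖S₂‖ := ContinuousLinearMap.opNorm_add_le _ _
    have h2 : ‖S₁‖ ≤ max ‖S₁‖ ‖S₂‖ := le_max_left _ _
    have h3 : ‖S₂‖ ≤ max ‖S₁‖ ‖S₂‖ := le_max_right _ _
    linarith
  -- Step II: R ⊆ decSet
  have stepII : R ⊆ decSet actA actB u := by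
    rintro c ⟨u₁, u₂, h₁, h₂, hdiff, rfl⟩
    have hmodsum : IsModuleMap actA actB ⇑(u₁ + u₂) := by
      constructor
      · intro α a
        simp only [ContinuousLinearMap.add_apply, h₁.2.1 α a, h₂.2.1 α a, map_add]
      · intro a α
        simp only [ContinuousLinearMap.add_apply, h₁.2.2 a α, h₂.2.2 a α]
        rw [map_add]
        rfl
    exact ⟨u₁ + u₂, u₁ + u₂, ⟨isCP_clm_add h₁.1 h₂.1, hmodsum⟩,
      ⟨isCP_clm_add h₁.1 h₂.1, hmodsum⟩, isCP_Vmat_sum h₁.1 h₂.1 hdiff hsa,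
      (max_self _).symm⟩
  have hBdec : BddBelow (decSet actA actB u) := by
    refine ⟨0, fun y hy => ?_⟩
    obtain ⟨S₁, S₂, _, _, _, rfl⟩ := hy
    exact le_max_iff.mpr (Or.inl (norm_nonneg _))
  have hBR : BddBelow R := by
    refine ⟨0, fun y hy => ?_⟩
    obtain ⟨u₁, u₂, _, _, _, rfl⟩ := hy
    exact norm_nonneg _
  have hRne : R.Nonempty := by
    obtain ⟨m, hm⟩ := hdec
    obtain ⟨c, hc, _⟩ := stepI m hm
    exact ⟨c, hc⟩
  rw [decNorm]
  apply le_antisymm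
  · exact csInf_le_csInf hBdec hRne stepII
  · refine le_csInf hdec ?_
    intro m hm
    obtain ⟨c, hcR, hcm⟩ := stepI m hm
    exact le_trans (csInf_le hBR hcR) hcm
end
end

section
/- Let u ∈ D_𝔄(A,B) and v ∈ D_𝔄(B,C) be decomposable 𝔄-module maps between C*-algebras. Then v∘u ∈ D_𝔄(A,C) and ‖v∘u‖_{𝔄-dec} ≤ ‖u‖_{𝔄-dec}·‖v‖_{𝔄-dec}. -/
open scoped TensorProduct
noncomputable section

/-! ### Infrastructure: the C*-algebra of square matrices over a C*-algebra -/

open scoped CStarModule WithCStarModule InnerProductSpace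
open WithCStarModule CStarModule
set_option linter.unusedSectionVars false
set_option maxHeartbeats 1000000
set_option synthInstance.maxHeartbeats 400000

/-- Type synonym for square matrices over a C*-algebra, to carry the operator norm. -/
def CM (k : ℕ) (𝒞 : Type*) : Type _ := Matrix (Fin k) (Fin k) 𝒞

section CMdev

variable {𝒞 : Type*} [NormedRing 𝒞] [StarRing 𝒞] [CStarRing 𝒞] [NormedAlgebra ℂ 𝒞]
  [StarModule ℂ 𝒞] [CompleteSpace 𝒞] {k : ℕ}

local instance : CStarAlgebra 𝒞 :=
  { ‹NormedRing 𝒞›, ‹StarRing 𝒞›, ‹CStarRing 𝒞›, ‹NormedAlgebra ℂ 𝒞›, ‹StarModule ℂ 𝒞›,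
    ‹CompleteSpace 𝒞› with }

attribute [local instance] CStarAlgebra.spectralOrder

local instance : StarOrderedRing 𝒞 := CStarAlgebra.spectralOrderedRing 𝒞

namespace CM

theorem starPos_sum_gen {D : Type*} [CStarAlgebra D] [PartialOrder D] [StarOrderedRing D]
    (x y : D) : ∃ w : D, star x * x + star y * y = star w * w := by
  have h : (0:D) ≤ star x * x + star y * y :=
    add_nonneg (star_mul_self_nonneg x) (star_mul_self_nonneg y)
  refine ⟨CFC.sqrt (star x * x + star y * y), ?_⟩
  have h1 : IsSelfAdjoint (CFC.sqrt (star x * x + star y * y)) :=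
    IsSelfAdjoint.of_nonneg (CFC.sqrt_nonneg _)
  rw [h1.star_eq, CFC.sqrt_mul_sqrt_self _ h]

theorem starPos_sum_two (x y : CStarMatrix (Fin k) (Fin k) 𝒞) :
    ∃ w : CStarMatrix (Fin k) (Fin k) 𝒞, star x * x + star y * y = star w * w :=
  starPos_sum_gen x y

end CM

/-- Key lemma: a sum of two star-squares of matrices over a C*-algebra is a star-square. -/
theorem Matrix.starPos_add_starPos' (x y : Matrix (Fin k) (Fin k) 𝒞) :
    ∃ w : Matrix (Fin k) (Fin k) 𝒞, star x * x + star y * y = star w * w :=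
  CM.starPos_sum_two (k := k) (𝒞 := 𝒞) x y

end CMdev

set_option linter.unusedSectionVars false
set_option maxHeartbeats 1000000

section StarPosLemmas

/-- transporting `StarPos` along a star-preserving ring equivalence -/
theorem StarPos.map_equiv {R S : Type*} [NonUnitalSemiring R] [NonUnitalSemiring S]
    [Star R] [Star S]
    (f : R ≃+* S) (hf : ∀ x, f (star x) = star (f x)) {x : R} (h : StarPos x) :
    StarPos (f x) := by
  obtain ⟨y, rfl⟩ := h
  exact ⟨f y, by rw [map_mul, hf]⟩

theorem starPos_submatrix {R : Type*} [NonUnitalSemiring R] [StarRing R]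
    {m n : Type*} [Fintype m] [Fintype n] [DecidableEq m] [DecidableEq n]
    (e : n ≃ m) {M : Matrix m m R} (h : StarPos M) : StarPos (M.submatrix e e) := by
  obtain ⟨y, rfl⟩ := h
  refine ⟨y.submatrix e e, ?_⟩
  rw [Matrix.star_eq_conjTranspose, Matrix.star_eq_conjTranspose,
    Matrix.conjTranspose_submatrix, Matrix.submatrix_mul_equiv]

theorem compRingEquiv_star {R : Type*} [Ring R] [StarRing R] {n m : ℕ}
    (M : Matrix (Fin n) (Fin n) (Matrix (Fin m) (Fin m) R)) :
    Matrix.compRingEquiv (Fin n) (Fin m) R (star M) =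
      star (Matrix.compRingEquiv (Fin n) (Fin m) R M) := by
  ext ⟨i, σ⟩ ⟨j, τ⟩
  simp [Matrix.compRingEquiv, Matrix.compAddEquiv, Matrix.comp,
    Matrix.star_eq_conjTranspose, Matrix.conjTranspose_apply]
  rfl

/-- sum of two star-squares of nested matrices is a star-square -/
theorem reindex_trick : True := trivial

theorem starPos_add_nested {𝒞 : Type*} [NormedRing 𝒞] [StarRing 𝒞] [CStarRing 𝒞]
    [NormedAlgebra ℂ 𝒞] [StarModule ℂ 𝒞] [CompleteSpace 𝒞] {n : ℕ}
    (x y : Matrix (Fin n) (Fin n) (Matrix (Fin 2) (Fin 2) 𝒞)) :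
    ∃ w, star x * x + star y * y = star w * w := by
  classical
  let F₁ := Matrix.compRingEquiv (Fin n) (Fin 2) 𝒞
  let F₂ := (Matrix.reindexAlgEquiv ℂ 𝒞 (finProdFinEquiv (m := n) (n := 2))).toRingEquiv
  let F := F₁.trans F₂
  have hstar : ∀ M, F (star M) = star (F M) := by
    intro M
    show F₂ (F₁ (star M)) = star (F₂ (F₁ M))
    rw [compRingEquiv_star]
    show Matrix.reindex _ _ _ = star (Matrix.reindex _ _ _)
    rw [Matrix.star_eq_conjTranspose, Matrix.star_eq_conjTranspose]
    erw [Matrix.conjTranspose_submatrix]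
    rfl
  obtain ⟨w', hw'⟩ := Matrix.starPos_add_starPos' (F x) (F y)
  refine ⟨F.symm w', ?_⟩
  have hww : F (star (F.symm w') * F.symm w') = star w' * w' := by
    rw [map_mul, hstar, RingEquiv.apply_symm_apply]
  apply F.injective
  rw [map_add, map_mul, map_mul, hstar, hstar, hww]
  exact hw'

end StarPosLemmas

section Corner

variable {R : Type*} [Ring R] [StarRing R] {n : ℕ}

/-- flip on `Fin 2` -/
def flp : Fin 2 → Fin 2 := ![1, 0]

@[simp] lemma flp_zero : flp 0 = 1 := rfl
@[simp] lemma flp_one : flp 1 = 0 := rfl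

/-- diagonal compression of a doubled matrix -/
def Phid (Y : Matrix (Fin n × Fin 2) (Fin n × Fin 2) (Matrix (Fin 2) (Fin 2) R)) :
    Matrix (Fin n) (Fin n) (Matrix (Fin 2) (Fin 2) R) :=
  fun i j => Matrix.of fun α β => Y (i, α) (j, β) α β

/-- off-diagonal compression of a doubled matrix -/
def Phio (Y : Matrix (Fin n × Fin 2) (Fin n × Fin 2) (Matrix (Fin 2) (Fin 2) R)) :
    Matrix (Fin n) (Fin n) (Matrix (Fin 2) (Fin 2) R) :=
  fun i j => Matrix.of fun α β => Y (i, flp α) (j, β) α β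

theorem phid_split (y : Matrix (Fin n × Fin 2) (Fin n × Fin 2) (Matrix (Fin 2) (Fin 2) R)) :
    Phid (star y * y) = star (Phid y) * Phid y + star (Phio y) * Phio y := by
  funext i j
  ext α β
  simp only [Phid, Phio, Matrix.add_apply, Matrix.mul_apply, Matrix.star_eq_conjTranspose,
    Matrix.conjTranspose_apply, Matrix.sum_apply, Matrix.of_apply, Fintype.sum_prod_type,
    Fin.sum_univ_two, flp_zero, flp_one, ← Finset.sum_add_distrib]
  refine Finset.sum_congr rfl fun k _ => ?_
  abel

end Corner

section CPComp

variable {A B C : Type*}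
  [NormedRing A] [StarRing A] [CStarRing A] [NormedAlgebra ℂ A] [StarModule ℂ A] [CompleteSpace A]
  [NormedRing B] [StarRing B] [CStarRing B] [NormedAlgebra ℂ B] [StarModule ℂ B] [CompleteSpace B]
  [NormedRing C] [StarRing C] [CStarRing C] [NormedAlgebra ℂ C] [StarModule ℂ C] [CompleteSpace C]

theorem isCP_comp {f : A → B} {g : B → C} (hf : IsCP f) (hg : IsCP g) : IsCP (g ∘ f) := by
  intro n M hM
  rw [← Matrix.map_map]
  exact hg n _ (hf n M hM)

theorem isCP_vmat_comp (s1 s2 u : A → B) (t1 t2 v : B → C)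
    (h1 : IsCP (Vmat s1 u s2)) (h2 : IsCP (Vmat t1 v t2)) :
    IsCP (Vmat (t1 ∘ s1) (v ∘ u) (t2 ∘ s2)) := by
  intro n M hM
  classical
  have hN : StarPos (M.map (Vmat s1 u s2)) := h1 n M hM
  set N := M.map (Vmat s1 u s2) with hNdef
  set Nf := Matrix.compRingEquiv (Fin n) (Fin 2) B N with hNfdef
  have hNf : StarPos Nf := StarPos.map_equiv _ compRingEquiv_star hN
  set e : Fin n × Fin 2 ≃ Fin (n * 2) := finProdFinEquiv with hedef
  set K := Nf.submatrix e.symm e.symm with hKdef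
  have hK : StarPos K := starPos_submatrix e.symm hNf
  have hL0 : StarPos (K.map (Vmat t1 v t2)) := h2 (n * 2) K hK
  set L := (K.map (Vmat t1 v t2)).submatrix e e with hLdef
  have hL : StarPos L := starPos_submatrix e hL0
  have hLentry : ∀ (i j : Fin n) (σ τ : Fin 2),
      L (i, σ) (j, τ) = Vmat t1 v t2 ((Vmat s1 u s2 (M i j)) σ τ) := by
    intro i j σ τ
    show (K.map (Vmat t1 v t2)) (e (i,σ)) (e (j,τ)) = _
    rw [Matrix.map_apply]
    have hKe : K (e (i,σ)) (e (j,τ)) = Vmat s1 u s2 (M i j) σ τ := by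
      show Nf (e.symm (e (i,σ))) (e.symm (e (j,τ))) = _
      rw [Equiv.symm_apply_apply, Equiv.symm_apply_apply]
      rfl
    rw [hKe]
  have hT : Phid L = M.map (Vmat (t1 ∘ s1) (v ∘ u) (t2 ∘ s2)) := by
    funext i j
    ext α β
    rw [Matrix.map_apply]
    show L (i, α) (j, β) α β = _
    rw [hLentry]
    fin_cases α <;> fin_cases β <;>
      simp [Vmat, adjMap, Function.comp]
  obtain ⟨y, hy⟩ := hL
  obtain ⟨w, hw⟩ := starPos_add_nested (Phid y) (Phio y)
  refine ⟨w, ?_⟩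
  rw [← hT, hy, phid_split, hw]

end CPComp

section Final

variable {𝔄 A B C : Type*}
    [NormedRing 𝔄] [StarRing 𝔄] [CStarRing 𝔄] [NormedAlgebra ℂ 𝔄] [StarModule ℂ 𝔄]
    [CompleteSpace 𝔄]
    [NormedRing A] [StarRing A] [CStarRing A] [NormedAlgebra ℂ A] [StarModule ℂ A]
    [CompleteSpace A]
    [NormedRing B] [StarRing B] [CStarRing B] [NormedAlgebra ℂ B] [StarModule ℂ B]
    [CompleteSpace B]
    [NormedRing C] [StarRing C] [CStarRing C] [NormedAlgebra ℂ C] [StarModule ℂ C]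
    [CompleteSpace C]

theorem isModuleMap_comp {actA : CompatibleAction 𝔄 A} {actB : CompatibleAction 𝔄 B}
    {actC : CompatibleAction 𝔄 C} {f : A → B} {g : B → C}
    (hf : IsModuleMap actA actB f) (hg : IsModuleMap actB actC g) :
    IsModuleMap actA actC (g ∘ f) := by
  refine ⟨fun α a => ?_, fun a α => ?_⟩
  · show g (f (actA.l α a)) = _
    rw [hf.1, hg.1]; rfl
  · show g (f (actA.r a α)) = _
    rw [hf.2, hg.2]; rfl

theorem isCPModuleMap_comp {actA : CompatibleAction 𝔄 A} {actB : CompatibleAction 𝔄 B}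
    {actC : CompatibleAction 𝔄 C} {f : A → B} {g : B → C}
    (hf : IsCPModuleMap actA actB f) (hg : IsCPModuleMap actB actC g) :
    IsCPModuleMap actA actC (g ∘ f) :=
  ⟨isCP_comp hf.1 hg.1, isModuleMap_comp hf.2 hg.2⟩

theorem decSet_nonneg {actA : CompatibleAction 𝔄 A} {actB : CompatibleAction 𝔄 B}
    {u : A →L[ℂ] B} : ∀ x ∈ decSet actA actB u, (0:ℝ) ≤ x := by
  rintro x ⟨S₁, S₂, _, _, _, rfl⟩
  exact le_trans (norm_nonneg S₁) (le_max_left _ _)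

theorem comp_mem_decSet {actA : CompatibleAction 𝔄 A} {actB : CompatibleAction 𝔄 B}
    {actC : CompatibleAction 𝔄 C} {u : A →L[ℂ] B} {v : B →L[ℂ] C}
    {S₁ S₂ : A →L[ℂ] B} {T₁ T₂ : B →L[ℂ] C}
    (hS₁ : IsCPModuleMap actA actB S₁) (hS₂ : IsCPModuleMap actA actB S₂)
    (hT₁ : IsCPModuleMap actB actC T₁) (hT₂ : IsCPModuleMap actB actC T₂)
    (hVu : IsCP (Vmat S₁ u S₂)) (hVv : IsCP (Vmat T₁ v T₂)) :
    max ‖T₁.comp S₁‖ ‖T₂.comp S₂‖ ∈ decSet actA actC (v.comp u) := by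
  refine ⟨T₁.comp S₁, T₂.comp S₂, ?_, ?_, ?_, rfl⟩
  · have := isCPModuleMap_comp hS₁ hT₁
    rwa [show (⇑T₁ ∘ ⇑S₁) = ⇑(T₁.comp S₁) from rfl] at this
  · have := isCPModuleMap_comp hS₂ hT₂
    rwa [show (⇑T₂ ∘ ⇑S₂) = ⇑(T₂.comp S₂) from rfl] at this
  · have := isCP_vmat_comp ⇑S₁ ⇑S₂ ⇑u ⇑T₁ ⇑T₂ ⇑v hVu hVv
    rwa [show (⇑T₁ ∘ ⇑S₁) = ⇑(T₁.comp S₁) from rfl,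
      show (⇑T₂ ∘ ⇑S₂) = ⇑(T₂.comp S₂) from rfl,
      show (⇑v ∘ ⇑u) = ⇑(v.comp u) from rfl] at this

theorem decNorm_comp'
    (actA : CompatibleAction 𝔄 A) (actB : CompatibleAction 𝔄 B)
    (actC : CompatibleAction 𝔄 C)
    (u : A →L[ℂ] B) (v : B →L[ℂ] C)
    (hu : IsDecomposable actA actB u) (hv : IsDecomposable actB actC v) :
    IsDecomposable actA actC (v.comp u) ∧
      decNorm actA actC (v.comp u) ≤ decNorm actA actB u * decNorm actB actC v := by
  classical
  obtain ⟨s₀, hs₀⟩ := hu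
  obtain ⟨t₀, ht₀⟩ := hv
  have bdd : BddBelow (decSet actA actC (v.comp u)) := ⟨0, fun x hx => decSet_nonneg x hx⟩
  -- decomposability
  obtain ⟨S₁, S₂, hS₁, hS₂, hVu, rfl⟩ := hs₀
  obtain ⟨T₁, T₂, hT₁, hT₂, hVv, rfl⟩ := ht₀
  have hmem := comp_mem_decSet hS₁ hS₂ hT₁ hT₂ hVu hVv
  refine ⟨⟨_, hmem⟩, ?_⟩
  -- norm bound
  have key : ∀ s ∈ decSet actA actB u, ∀ t ∈ decSet actB actC v,
      decNorm actA actC (v.comp u) ≤ s * t := by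
    rintro s ⟨S₁', S₂', hS₁', hS₂', hVu', rfl⟩ t ⟨T₁', T₂', hT₁', hT₂', hVv', rfl⟩
    have hmem' := comp_mem_decSet hS₁' hS₂' hT₁' hT₂' hVu' hVv'
    refine (csInf_le bdd hmem').trans ?_
    have h1 : ‖T₁'.comp S₁'‖ ≤ max ‖S₁'‖ ‖S₂'‖ * max ‖T₁'‖ ‖T₂'‖ := by
      refine (ContinuousLinearMap.opNorm_comp_le _ _).trans ?_
      rw [mul_comm]
      exact mul_le_mul (le_max_left _ _) (le_max_left _ _) (norm_nonneg _)
        (le_trans (norm_nonneg _) (le_max_left _ _))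
    have h2 : ‖T₂'.comp S₂'‖ ≤ max ‖S₁'‖ ‖S₂'‖ * max ‖T₁'‖ ‖T₂'‖ := by
      refine (ContinuousLinearMap.opNorm_comp_le _ _).trans ?_
      rw [mul_comm]
      exact mul_le_mul (le_max_right _ _) (le_max_right _ _) (norm_nonneg _)
        (le_trans (norm_nonneg _) (le_max_left _ _))
    exact max_le h1 h2
  set P := decNorm actA actC (v.comp u)
  have hUne : (decSet actA actB u).Nonempty := ⟨_, ⟨S₁, S₂, hS₁, hS₂, hVu, rfl⟩⟩
  have hVne : (decSet actB actC v).Nonempty := ⟨_, ⟨T₁, T₂, hT₁, hT₂, hVv, rfl⟩⟩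
  have ha : 0 ≤ decNorm actA actB u := Real.sInf_nonneg fun x hx => decSet_nonneg x hx
  have hb : 0 ≤ decNorm actB actC v := Real.sInf_nonneg fun x hx => decSet_nonneg x hx
  have step1 : ∀ t ∈ decSet actB actC v, P ≤ decNorm actA actB u * t := by
    intro t ht
    have htnn : 0 ≤ t := decSet_nonneg t ht
    rcases eq_or_lt_of_le htnn with h0 | hpos
    · obtain ⟨s', hs'⟩ := hUne
      have := key s' hs' t ht
      rw [← h0, mul_zero] at this ⊢
      exact this
    · have hdiv : ∀ s ∈ decSet actA actB u, P / t ≤ s := fun s hs =>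
        (div_le_iff₀ hpos).mpr (key s hs t ht)
      have := le_csInf hUne hdiv
      calc P = P / t * t := by field_simp
        _ ≤ decNorm actA actB u * t := by
            exact mul_le_mul_of_nonneg_right this htnn
  rcases eq_or_lt_of_le ha with h0 | hapos
  · obtain ⟨t', ht'⟩ := hVne
    have := step1 t' ht'
    rw [← h0, zero_mul] at this ⊢
    exact this
  · have hdiv : ∀ t ∈ decSet actB actC v, P / decNorm actA actB u ≤ t := fun t ht => by
      rw [div_le_iff₀ hapos, mul_comm]
      exact step1 t ht
    have := le_csInf hVne hdiv
    calc P = P / decNorm actA actB u * decNorm actA actB u := by field_simp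
      _ ≤ decNorm actB actC v * decNorm actA actB u :=
          mul_le_mul_of_nonneg_right this ha
      _ = decNorm actA actB u * decNorm actB actC v := mul_comm _ _

end Final

/-- The composition of decomposable `𝔄`-module maps is decomposable,
and `‖v ∘ u‖_{𝔄-dec} ≤ ‖u‖_{𝔄-dec} · ‖v‖_{𝔄-dec}`. -/
theorem decNorm_comp
    {𝔄 A B C : Type*}
    [NormedRing 𝔄] [StarRing 𝔄] [CStarRing 𝔄] [NormedAlgebra ℂ 𝔄] [StarModule ℂ 𝔄]
    [CompleteSpace 𝔄]
    [NormedRing A] [StarRing A] [CStarRing A] [NormedAlgebra ℂ A] [StarModule ℂ A]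
    [CompleteSpace A]
    [NormedRing B] [StarRing B] [CStarRing B] [NormedAlgebra ℂ B] [StarModule ℂ B]
    [CompleteSpace B]
    [NormedRing C] [StarRing C] [CStarRing C] [NormedAlgebra ℂ C] [StarModule ℂ C]
    [CompleteSpace C]
    (actA : CompatibleAction 𝔄 A) (actB : CompatibleAction 𝔄 B)
    (actC : CompatibleAction 𝔄 C)
    (u : A →L[ℂ] B) (v : B →L[ℂ] C)
    (hu : IsDecomposable actA actB u) (hv : IsDecomposable actB actC v) :
    IsDecomposable actA actC (v.comp u) ∧
      decNorm actA actC (v.comp u) ≤ decNorm actA actB u * decNorm actB actC v := by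
  exact decNorm_comp' actA actB actC u v hu hv
end
end
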